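/- arXiv:1712.05735 — 6 statements merged into one kernel-verified Lean document; each statement's English description precedes it below -/
import Mathlib

section
/- For every Boolean function f:{0,1}^n→{0,1}, the alternation of f is at most 2^{DT(f)+1} − 1, where DT(f) is the minimum decision tree depth of f. -/
open Finset

/-- The maximal chain in the Boolean hypercube corresponding to a permutation `σ`:
its `k`-th element is the point whose `i`-th coordinate is `1` iff `σ i < k`. -/
def chainOf {n : ℕ} (σ : Equiv.Perm (Fin n)) (k : Fin (n + 1)) : Fin n → Bool :=
  fun i => decide ((σ i : ℕ) < (k : ℕ))

/-- The number of alternations of `f` along the chain of `σ`. -/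
def altOn {n : ℕ} (f : (Fin n → Bool) → Bool) (σ : Equiv.Perm (Fin n)) : ℕ :=
  (Finset.univ.filter fun k : Fin n =>
    f (chainOf σ k.castSucc) ≠ f (chainOf σ k.succ)).card

/-- The alternation of a Boolean function: the maximum number of value changes
along any maximal chain from `0^n` to `1^n`. -/
def alt {n : ℕ} (f : (Fin n → Bool) → Bool) : ℕ :=
  Finset.univ.sup (altOn f)

/-- The number of decreases (`1 → 0` changes) of `f` along the chain of `σ`. -/
def dcOn {n : ℕ} (f : (Fin n → Bool) → Bool) (σ : Equiv.Perm (Fin n)) : ℕ :=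
  (Finset.univ.filter fun k : Fin n =>
    f (chainOf σ k.castSucc) = true ∧ f (chainOf σ k.succ) = false).card

/-- The decrease of a Boolean function: the maximum number of `1 → 0` changes
along any maximal chain from `0^n` to `1^n`. -/
def dc {n : ℕ} (f : (Fin n → Bool) → Bool) : ℕ :=
  Finset.univ.sup (dcOn f)

/-- Deterministic decision trees on `n` Boolean variables. -/
inductive DTree (n : ℕ) : Type where
  | leaf : Bool → DTree n
  | node : Fin n → DTree n → DTree n → DTree n

namespace DTree

/-- Evaluation of a decision tree on an input. -/
def eval {n : ℕ} : DTree n → (Fin n → Bool) → Bool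
  | leaf b, _ => b
  | node i t0 t1, x => if x i then eval t1 x else eval t0 x

/-- Depth of a decision tree. -/
def depth {n : ℕ} : DTree n → ℕ
  | leaf _ => 0
  | node _ t0 t1 => max (depth t0) (depth t1) + 1

end DTree

/-- Minimum depth of a deterministic decision tree computing `f`. -/
noncomputable def DT {n : ℕ} (f : (Fin n → Bool) → Bool) : ℕ :=
  sInf {d | ∃ t : DTree n, (∀ x, t.eval x = f x) ∧ t.depth = d}

/-- Flip the `i`-th bit of `x`. -/
def flipBit {n : ℕ} (x : Fin n → Bool) (i : Fin n) : Fin n → Bool :=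
  Function.update x i (!x i)

/-- Sensitivity of `f` at `x`. -/
def sensAt {n : ℕ} (f : (Fin n → Bool) → Bool) (x : Fin n → Bool) : ℕ :=
  (Finset.univ.filter fun i => f (flipBit x i) ≠ f x).card

/-- Sensitivity of `f`. -/
def sens {n : ℕ} (f : (Fin n → Bool) → Bool) : ℕ :=
  Finset.univ.sup fun x : Fin n → Bool => sensAt f x

/-- Total influence of `f`: the average sensitivity over a uniformly random input. -/
noncomputable def influence {n : ℕ} (f : (Fin n → Bool) → Bool) : ℝ :=
  (∑ x : Fin n → Bool, (sensAt f x : ℝ)) / 2 ^ n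

/-- Fourier coefficient of a real-valued function on the Boolean cube. -/
noncomputable def bFourier {n : ℕ} (g : (Fin n → Bool) → ℝ) (S : Finset (Fin n)) : ℝ :=
  (∑ x : Fin n → Bool, g x * (-1 : ℝ) ^ (S.filter fun i => x i = true).card) / 2 ^ n

/-- The `±1`-valued version `1 - 2f` of a `{0,1}`-valued Boolean function. -/
def toPM {n : ℕ} (f : (Fin n → Bool) → Bool) : (Fin n → Bool) → ℝ :=
  fun x => 1 - 2 * (if f x then (1 : ℝ) else 0)

/-- Sparsity of a real-valued function on the Boolean cube: the number of nonzero
Fourier coefficients. -/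
noncomputable def sparsityR {n : ℕ} (g : (Fin n → Bool) → ℝ) : ℕ :=
  letI := Classical.decPred fun S : Finset (Fin n) => bFourier g S ≠ 0
  (Finset.univ.filter fun S : Finset (Fin n) => bFourier g S ≠ 0).card

/-- Sparsity of a `{0,1}`-valued Boolean function, i.e. the sparsity of `1 - 2f`. -/
noncomputable def sparsity {n : ℕ} (f : (Fin n → Bool) → Bool) : ℕ :=
  sparsityR (toPM f)

/-- Evaluation of a multilinear polynomial, given by its coefficients indexed by
monomials (subsets of variables), on a Boolean input. -/
def mlEval {n : ℕ} {R : Type*} [CommRing R] (c : Finset (Fin n) → R) (x : Fin n → Bool) : R :=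
  ∑ S : Finset (Fin n), c S * ∏ i ∈ S, (if x i then (1 : R) else 0)

/-- `c` is the (unique) multilinear polynomial over `R` agreeing with `f` on the cube. -/
def Represents {n : ℕ} {R : Type*} [CommRing R] (c : Finset (Fin n) → R)
    (f : (Fin n → Bool) → Bool) : Prop :=
  ∀ x, mlEval c x = if f x then 1 else 0

/-- The degree of the multilinear polynomial over `R` agreeing with `f`. -/
noncomputable def degRing {n : ℕ} (R : Type*) [CommRing R] (f : (Fin n → Bool) → Bool) : ℕ :=
  sInf {d | ∃ c : Finset (Fin n) → R, Represents c f ∧ ∀ S, c S ≠ 0 → S.card ≤ d}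

/-- Real degree `deg f`. -/
noncomputable def degR {n : ℕ} (f : (Fin n → Bool) → Bool) : ℕ := degRing ℝ f

/-- Degree over `ℤ_m`; `degMod 2 f` is the `𝔽₂`-degree. -/
noncomputable def degMod {n : ℕ} (m : ℕ) (f : (Fin n → Bool) → Bool) : ℕ := degRing (ZMod m) f

/-- Block composition `f ∘ g` of Boolean functions. -/
def comp {m n : ℕ} (f : (Fin m → Bool) → Bool) (g : (Fin n → Bool) → Bool) :
    (Fin (m * n) → Bool) → Bool :=
  fun x => f fun i => g fun j => x (finProdFinEquiv (i, j))

/-- `iterComp h k` is the `(k+1)`-fold composition `h^{∘(k+1)}`. -/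
def iterComp {n : ℕ} (h : (Fin n → Bool) → Bool) : (k : ℕ) → (Fin (n ^ (k + 1)) → Bool) → Bool
  | 0 => fun x => h fun i => x (Fin.cast (pow_one n).symm i)
  | k + 1 => fun x =>
      comp (iterComp h (k)) h fun i => x (Fin.cast (pow_succ n (k + 1)).symm i)

/-- The address function `ADDR₂` on `6` bits: `ADDR₂(x₁,x₂,y₀,y₁,y₂,y₃) = y_{2x₁+x₂}`. -/
def ADDR2 (x : Fin 6 → Bool) : Bool :=
  if x 0 then (if x 1 then x 5 else x 4) else (if x 1 then x 3 else x 2)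

/-- The family `F = {f_k}`: `f₁(x) = x`, and
`f_{k+1}(z, u, v) = f_k(u)` if `z = 0` and `f_k(v)` if `z = 1`,
where `u, v` are disjoint blocks of `2^k - 1` variables.
(`famF 0` is a dummy constant function; the family starts at `k = 1`.) -/
def famF : (k : ℕ) → (Fin (2 ^ k - 1) → Bool) → Bool
  | 0 => fun _ => false
  | 1 => fun x => x ⟨0, by norm_num⟩
  | k + 2 => fun x =>
      if x ⟨0, by
          have h : 1 < 2 ^ (k + 2) := Nat.one_lt_two_pow_iff.mpr (by omega)
          omega⟩ then
        famF (k + 1) (fun j => x ⟨1 + (2 ^ (k + 1) - 1) + (j : ℕ), by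
          have hj := j.isLt
          have h : 2 ^ (k + 2) = 2 * 2 ^ (k + 1) := by ring
          have h1 : 0 < 2 ^ (k + 1) := Nat.two_pow_pos _
          omega⟩)
      else
        famF (k + 1) (fun j => x ⟨1 + (j : ℕ), by
          have hj := j.isLt
          have h : 2 ^ (k + 2) = 2 * 2 ^ (k + 1) := by ring
          have h1 : 0 < 2 ^ (k + 1) := Nat.two_pow_pos _
          omega⟩)
/-- Build a tree querying the variables in `l`, defaulting other variables to `x`. -/
def buildT {n : ℕ} (f : (Fin n → Bool) → Bool) : List (Fin n) → (Fin n → Bool) → DTree n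
  | [], x => .leaf (f x)
  | i :: l, x =>
      .node i (buildT f l (Function.update x i false)) (buildT f l (Function.update x i true))

lemma buildT_eval {n : ℕ} (f : (Fin n → Bool) → Bool) (l : List (Fin n)) (x y : Fin n → Bool) :
    (buildT f l x).eval y = f (fun j => if j ∈ l then y j else x j) := by
  induction l generalizing x with
  | nil => simp [buildT, DTree.eval]
  | cons i l ih =>
    have key : ∀ b : Bool, y i = b →
        f (fun j => if j ∈ l then y j else Function.update x i b j)
          = f (fun j => if j ∈ i :: l then y j else x j) := by
      intro b hb
      congr 1; funext j
      by_cases hj : j ∈ l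
      · simp [hj]
      · by_cases hji : j = i
        · subst hji; simp [hj, hb]
        · simp [hj, hji, Function.update_of_ne hji]
    simp only [buildT, DTree.eval]
    by_cases h : y i
    · rw [if_pos h, ih, key true h]
    · rw [if_neg h, ih, key false (by simpa using h)]

lemma exists_tree {n : ℕ} (f : (Fin n → Bool) → Bool) :
    ∃ t : DTree n, ∀ x, t.eval x = f x := by
  refine ⟨buildT f (List.finRange n) (fun _ => false), fun y => ?_⟩
  rw [buildT_eval]
  congr 1; funext j; simp [List.mem_finRange]

lemma altOn_eval_le {n : ℕ} (t : DTree n) (σ : Equiv.Perm (Fin n)) :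
    altOn t.eval σ ≤ 2 ^ (t.depth + 1) - 1 := by
  induction t with
  | leaf b => simp [altOn, DTree.eval, DTree.depth]
  | node i t0 t1 ih0 ih1 =>
    have hsub : (univ.filter fun k : Fin n =>
        (DTree.node i t0 t1).eval (chainOf σ k.castSucc)
          ≠ (DTree.node i t0 t1).eval (chainOf σ k.succ))
        ⊆ ((univ.filter fun k : Fin n =>
              t0.eval (chainOf σ k.castSucc) ≠ t0.eval (chainOf σ k.succ))
            ∪ (univ.filter fun k : Fin n =>
              t1.eval (chainOf σ k.castSucc) ≠ t1.eval (chainOf σ k.succ)))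
          ∪ {σ i} := by
      intro k hk
      simp only [mem_filter, mem_univ, true_and] at hk
      simp only [mem_union, mem_filter, mem_univ, true_and, mem_singleton]
      rcases lt_trichotomy (k : ℕ) ((σ i : Fin n) : ℕ) with h | h | h
      · left; left
        have h1 : chainOf σ k.castSucc i = false := by
          simp only [chainOf, Fin.coe_castSucc, decide_eq_false_iff_not]; omega
        have h2 : chainOf σ k.succ i = false := by
          simp only [chainOf, Fin.val_succ, decide_eq_false_iff_not]; omega
        simpa [DTree.eval, h1, h2] using hk
      · right; exact Fin.ext h
      · left; right
        have h1 : chainOf σ k.castSucc i = true := by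
          simp only [chainOf, Fin.coe_castSucc, decide_eq_true_eq]; omega
        have h2 : chainOf σ k.succ i = true := by
          simp only [chainOf, Fin.val_succ, decide_eq_true_eq]; omega
        simpa [DTree.eval, h1, h2] using hk
    have hcard : altOn (DTree.node i t0 t1).eval σ ≤ altOn t0.eval σ + altOn t1.eval σ + 1 := by
      calc altOn (DTree.node i t0 t1).eval σ ≤ _ := card_le_card hsub
        _ ≤ _ + ({σ i} : Finset (Fin n)).card := card_union_le _ _
        _ ≤ altOn t0.eval σ + altOn t1.eval σ + 1 := by
            simp only [card_singleton]
            exact Nat.add_le_add_right (card_union_le _ _) 1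
    have hm0 : (2:ℕ) ^ (t0.depth + 1) ≤ 2 ^ (max t0.depth t1.depth + 1) :=
      Nat.pow_le_pow_right (by norm_num) (by omega)
    have hm1 : (2:ℕ) ^ (t1.depth + 1) ≤ 2 ^ (max t0.depth t1.depth + 1) :=
      Nat.pow_le_pow_right (by norm_num) (by omega)
    have hpos : (1:ℕ) ≤ 2 ^ (t0.depth + 1) := Nat.one_le_two_pow
    have hpos' : (1:ℕ) ≤ 2 ^ (t1.depth + 1) := Nat.one_le_two_pow
    have hd : (DTree.node i t0 t1).depth = max t0.depth t1.depth + 1 := rfl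
    have h2 : (2:ℕ) ^ (max t0.depth t1.depth + 1 + 1) = 2 * 2 ^ (max t0.depth t1.depth + 1) :=
      pow_succ' 2 _
    rw [hd]
    omega

/-- For every Boolean function `f : {0,1}ⁿ → {0,1}`,
`alt f ≤ 2 ^ (DT f + 1) - 1`. -/
theorem alt_le_two_pow_DT_succ_sub_one {n : ℕ} (f : (Fin n → Bool) → Bool) :
    alt f ≤ 2 ^ (DT f + 1) - 1 := by
  have hne : {d | ∃ t : DTree n, (∀ x, t.eval x = f x) ∧ t.depth = d}.Nonempty := by
    obtain ⟨t, ht⟩ := exists_tree f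
    exact ⟨t.depth, t, ht, rfl⟩
  obtain ⟨t, ht, hd⟩ := Nat.sInf_mem hne
  have hf : DTree.eval t = f := funext ht
  rw [alt]
  apply Finset.sup_le
  intro σ _
  have h := altOn_eval_le t σ
  rw [hf] at h
  rw [DT, hd] at *
  exact h
end

section
/- For every k ≥ 1, the function f_k in the family F satisfies alt(f_k) = 2^k − 1, i.e. alt(f_k) = 2^{DT(f_k)} − 1. -/
open Finset

/- ===================== Auxiliary development ===================== -/
set_option maxHeartbeats 1000000

namespace DTree

/-- Relabel variables of a tree along a map `e`. -/
def rmap {m n : ℕ} (e : Fin m → Fin n) : DTree m → DTree n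
  | leaf b => leaf b
  | node i t0 t1 => node (e i) (rmap e t0) (rmap e t1)

lemma eval_rmap {m n : ℕ} (e : Fin m → Fin n) (t : DTree m) (x : Fin n → Bool) :
    (t.rmap e).eval x = t.eval (fun i => x (e i)) := by
  induction t with
  | leaf b => rfl
  | node i t0 t1 h0 h1 => simp [rmap, eval, h0, h1]

lemma depth_rmap {m n : ℕ} (e : Fin m → Fin n) (t : DTree m) :
    (t.rmap e).depth = t.depth := by
  induction t with
  | leaf b => rfl
  | node i t0 t1 h0 h1 => simp [rmap, depth, h0, h1]

/-- The set of variables queried in a tree. -/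
def vars {n : ℕ} : DTree n → Finset (Fin n)
  | leaf _ => ∅
  | node i t0 t1 => insert i (vars t0 ∪ vars t1)

lemma card_vars_le {n : ℕ} (t : DTree n) : t.vars.card ≤ 2 ^ t.depth - 1 := by
  induction t with
  | leaf b => simp [vars, depth]
  | node i t0 t1 h0 h1 =>
    have hins := Finset.card_insert_le i (vars t0 ∪ vars t1)
    have hun := Finset.card_union_le (vars t0) (vars t1)
    have h2 : 2 ^ t0.depth ≤ 2 ^ (max t0.depth t1.depth) :=
      Nat.pow_le_pow_right (by norm_num) (le_max_left _ _)
    have h3 : 2 ^ t1.depth ≤ 2 ^ (max t0.depth t1.depth) :=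
      Nat.pow_le_pow_right (by norm_num) (le_max_right _ _)
    have hp : 2 ^ (max t0.depth t1.depth + 1) = 2 * 2 ^ (max t0.depth t1.depth) := by
      rw [pow_succ]; ring
    have p0 : 0 < 2 ^ t0.depth := Nat.two_pow_pos _
    have p1 : 0 < 2 ^ t1.depth := Nat.two_pow_pos _
    show (insert i (vars t0 ∪ vars t1)).card ≤ 2 ^ (max t0.depth t1.depth + 1) - 1
    omega

lemma eval_eq_of_agree {n : ℕ} (t : DTree n) (x y : Fin n → Bool)
    (h : ∀ i ∈ t.vars, x i = y i) : t.eval x = t.eval y := by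
  induction t with
  | leaf b => rfl
  | node i t0 t1 h0 h1 =>
    have hi : x i = y i := h i (by simp [vars])
    have hx0 := h0 fun j hj => h j (by simp [vars, hj])
    have hx1 := h1 fun j hj => h j (by simp [vars, hj])
    simp [eval, hi, hx0, hx1]

end DTree

/-- If flipping bit `i` changes `f` somewhere, then any tree computing `f` queries `i`. -/
lemma mem_vars_of_sensitive {n : ℕ} (t : DTree n) (f : (Fin n → Bool) → Bool)
    (hf : ∀ x, t.eval x = f x) (i : Fin n) (x : Fin n → Bool)
    (hx : f (flipBit x i) ≠ f x) : i ∈ t.vars := by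
  by_contra hmem
  apply hx
  rw [← hf, ← hf]
  apply DTree.eval_eq_of_agree
  intro j hj
  have : j ≠ i := fun h => hmem (h ▸ hj)
  simp [flipBit, Function.update_apply, this]


lemma two_pow_succ_sub_one (k : ℕ) : 2 ^ (k + 2) - 1 = 1 + (2 ^ (k + 1) - 1) + (2 ^ (k + 1) - 1) := by
  have h : 2 ^ (k + 2) = 2 * 2 ^ (k + 1) := by ring
  have h1 : 0 < 2 ^ (k + 1) := Nat.two_pow_pos _
  omega

/-- The natural depth-`k+1` decision tree computing `famF (k+1)`. -/
def treeF : (k : ℕ) → DTree (2 ^ (k + 1) - 1)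
  | 0 => DTree.node ⟨0, by norm_num⟩ (DTree.leaf false) (DTree.leaf true)
  | k + 1 => DTree.node ⟨0, by have h : 1 < 2 ^ (k + 1 + 1) := Nat.one_lt_two_pow_iff.mpr (by omega); omega⟩
      (DTree.rmap (fun j => ⟨1 + (j : ℕ), by
          have hj := j.isLt
          have h : 2 ^ (k + 1 + 1) = 2 * 2 ^ (k + 1) := by ring
          have h1 : 0 < 2 ^ (k + 1) := Nat.two_pow_pos _
          omega⟩) (treeF k))
      (DTree.rmap (fun j => ⟨1 + (2 ^ (k + 1) - 1) + (j : ℕ), by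
          have hj := j.isLt
          have h : 2 ^ (k + 1 + 1) = 2 * 2 ^ (k + 1) := by ring
          have h1 : 0 < 2 ^ (k + 1) := Nat.two_pow_pos _
          omega⟩) (treeF k))

lemma depth_treeF (k : ℕ) : (treeF k).depth = k + 1 := by
  induction k with
  | zero => rfl
  | succ k ih => simp [treeF, DTree.depth, DTree.depth_rmap, ih]

lemma eval_treeF (k : ℕ) (x : Fin (2 ^ (k + 1) - 1) → Bool) :
    (treeF k).eval x = famF (k + 1) x := by
  induction k with
  | zero =>
    show (if x ⟨0, _⟩ then true else false) = x ⟨0, _⟩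
    cases h : x ⟨0, by norm_num⟩ <;> simp [h]
  | succ k ih =>
    show (if x ⟨0, _⟩ then _ else _) = famF (k + 2) x
    rw [show famF (k + 2) x = if x ⟨0, _⟩ then _ else _ from rfl]
    cases h : x ⟨0, _⟩ <;>
      simp only [h, if_true, if_false, DTree.eval_rmap, ih]

lemma flipBit_apply {n : ℕ} (x : Fin n → Bool) (i m : Fin n) :
    flipBit x i m = if m = i then !(x i) else x m := by
  simp [flipBit, Function.update_apply]

def idx0 (k : ℕ) : Fin (2 ^ (k + 2) - 1) :=
  ⟨0, by have h : 1 < 2 ^ (k + 2) := Nat.one_lt_two_pow_iff.mpr (by omega); omega⟩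

def idxL (k : ℕ) (j : Fin (2 ^ (k + 1) - 1)) : Fin (2 ^ (k + 2) - 1) :=
  ⟨1 + (j : ℕ), by
    have hj := j.isLt
    have h : 2 ^ (k + 2) = 2 * 2 ^ (k + 1) := by ring
    have h1 : 0 < 2 ^ (k + 1) := Nat.two_pow_pos _
    omega⟩

def idxR (k : ℕ) (j : Fin (2 ^ (k + 1) - 1)) : Fin (2 ^ (k + 2) - 1) :=
  ⟨1 + (2 ^ (k + 1) - 1) + (j : ℕ), by
    have hj := j.isLt
    have h : 2 ^ (k + 2) = 2 * 2 ^ (k + 1) := by ring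
    have h1 : 0 < 2 ^ (k + 1) := Nat.two_pow_pos _
    omega⟩

lemma famF_succ (k : ℕ) (x : Fin (2 ^ (k + 2) - 1) → Bool) :
    famF (k + 2) x =
      if x (idx0 k) then famF (k + 1) (fun j => x (idxR k j))
      else famF (k + 1) (fun j => x (idxL k j)) := rfl

lemma famF_one (x : Fin (2 ^ 1 - 1) → Bool) : famF 1 x = x ⟨0, by norm_num⟩ := rfl

lemma famF_const (k : ℕ) (b : Bool) : famF (k + 1) (fun _ => b) = b := by
  induction k with
  | zero => rfl
  | succ k ih =>
    show (if b then famF (k + 1) _ else famF (k + 1) _) = b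
    cases b <;> simpa using ih

/-- Extend a function on `Fin n` to `ℕ` by `false`. -/
def extend {n : ℕ} (x' : Fin n → Bool) (t : ℕ) : Bool :=
  if h : t < n then x' ⟨t, h⟩ else false

lemma extend_val {n : ℕ} (x' : Fin n → Bool) (j : Fin n) : extend x' (j : ℕ) = x' j := by
  rw [extend, dif_pos j.isLt]

/-- Every variable of `famF (k+1)` is sensitive somewhere. -/
lemma famF_sensitive (k : ℕ) (i : Fin (2 ^ (k + 1) - 1)) :
    ∃ x, famF (k + 1) (flipBit x i) ≠ famF (k + 1) x := by
  induction k with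
  | zero =>
    refine ⟨fun _ => false, ?_⟩
    have hi : i = ⟨0, by norm_num⟩ := Fin.ext (by omega)
    subst hi
    rw [famF_one, famF_one]
    simp [flipBit]
  | succ k ih =>
    show ∃ x : Fin (2 ^ (k + 2) - 1) → Bool,
      famF (k + 2) (flipBit x i) ≠ famF (k + 2) x
    have hi : (i : ℕ) < 2 ^ (k + 2) - 1 := i.isLt
    have hpow : 2 ^ (k + 2) = 2 * 2 ^ (k + 1) := by ring
    have hp1 : 0 < 2 ^ (k + 1) := Nat.two_pow_pos _
    rcases Nat.lt_or_ge (i : ℕ) (2 ^ (k + 1)) with hc | hc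
    · by_cases h0 : (i : ℕ) = 0
      · -- root variable
        refine ⟨fun m => decide (2 ^ (k + 1) ≤ (m : ℕ)), ?_⟩
        have hi0 : idx0 k = i := Fin.ext (by simp [idx0, h0])
        rw [famF_succ, famF_succ]
        have h1 : flipBit (fun m : Fin (2 ^ (k + 2) - 1) => decide (2 ^ (k + 1) ≤ (m : ℕ))) i (idx0 k) = true := by
          rw [flipBit_apply, if_pos hi0]
          show (!(decide (2 ^ (k + 1) ≤ (i : ℕ)))) = true
          simp
          omega
        have h2 : decide (2 ^ (k + 1) ≤ ((idx0 k) : ℕ)) = false := by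
          simp [idx0]
        rw [h1, h2, if_pos rfl, if_neg Bool.false_ne_true]
        have h3 : (fun j => flipBit (fun m : Fin (2 ^ (k + 2) - 1) => decide (2 ^ (k + 1) ≤ (m : ℕ))) i (idxR k j)) = fun _ => true := by
          funext j
          have hne : idxR k j ≠ i := by
            intro hEq
            have hv : (idxR k j : ℕ) = (i : ℕ) := congrArg Fin.val hEq
            simp only [idxR] at hv
            omega
          rw [flipBit_apply, if_neg hne]
          show decide (2 ^ (k + 1) ≤ ((idxR k j) : ℕ)) = true
          simp only [idxR, decide_eq_true_eq]
          exact decide_eq_true (by omega)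
        have h4 : (fun j : Fin (2 ^ (k + 1) - 1) => decide (2 ^ (k + 1) ≤ ((idxL k j) : ℕ))) = (fun _ => false) := by
          funext j
          have hj := j.isLt
          simp only [idxL, decide_eq_false_iff_not, not_le]
          exact decide_eq_false (by omega)
        rw [h3, h4, famF_const, famF_const]
        simp
      · -- left-block variable
        have h1le : 1 ≤ (i : ℕ) := Nat.pos_of_ne_zero h0
        set j : Fin (2 ^ (k + 1) - 1) := ⟨(i : ℕ) - 1, by omega⟩ with hj
        obtain ⟨x', hx'⟩ := ih j
        refine ⟨fun m => if (m : ℕ) = 0 then false else extend x' ((m : ℕ) - 1), ?_⟩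
        set x : Fin (2 ^ (k + 2) - 1) → Bool :=
          fun m => if (m : ℕ) = 0 then false else extend x' ((m : ℕ) - 1) with hx
        have hxval : ∀ m : Fin (2 ^ (k + 2) - 1), (m : ℕ) ≠ 0 → x m = extend x' ((m : ℕ) - 1) := by
          intro m hm
          show ite _ _ _ = _
          rw [if_neg hm]
        have hne : idx0 k ≠ i := by
          intro hEq
          exact h0 (by simpa [idx0] using (congrArg Fin.val hEq).symm)
        have hz : x (idx0 k) = false := by
          show ite _ _ _ = false
          rw [if_pos (by simp [idx0])]
        have hzf : flipBit x i (idx0 k) = false := by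
          rw [flipBit_apply, if_neg hne, hz]
        rw [famF_succ, famF_succ, hz, hzf, if_neg Bool.false_ne_true, if_neg Bool.false_ne_true]
        have hidxL : ∀ j' : Fin (2 ^ (k + 1) - 1), ((idxL k j' : ℕ)) = 1 + (j' : ℕ) := by
          intro j'; simp [idxL]
        have hL : (fun j' => x (idxL k j')) = x' := by
          funext j'
          rw [hxval (idxL k j') (by rw [hidxL]; omega), hidxL]
          rw [show 1 + (j' : ℕ) - 1 = (j' : ℕ) by omega]
          exact extend_val x' j'
        have hLf : (fun j' => flipBit x i (idxL k j')) = flipBit x' j := by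
          funext j'
          rw [flipBit_apply, flipBit_apply]
          by_cases hjj : j' = j
          · subst hjj
            rw [if_pos (Fin.ext (by rw [hidxL]; simp [hj]; omega)), if_pos rfl]
            congr 1
            rw [hxval i h0]
            rw [show (i : ℕ) - 1 = ((j : Fin (2 ^ (k + 1) - 1)) : ℕ) by simp [hj]]
            exact extend_val x' j
          · rw [if_neg, if_neg hjj]
            · exact congrFun hL j'
            · intro hEq
              apply hjj
              have hv : 1 + (j' : ℕ) = (i : ℕ) := by
                rw [← hidxL j']; exact congrArg Fin.val hEq
              exact Fin.ext (by simp [hj]; omega)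
        rw [hL, hLf]
        exact hx'
    · -- right-block variable
      set j : Fin (2 ^ (k + 1) - 1) := ⟨(i : ℕ) - 2 ^ (k + 1), by omega⟩ with hj
      obtain ⟨x', hx'⟩ := ih j
      refine ⟨fun m => if (m : ℕ) = 0 then true else extend x' ((m : ℕ) - 2 ^ (k + 1)), ?_⟩
      set x : Fin (2 ^ (k + 2) - 1) → Bool :=
        fun m => if (m : ℕ) = 0 then true else extend x' ((m : ℕ) - 2 ^ (k + 1)) with hx
      have hxval : ∀ m : Fin (2 ^ (k + 2) - 1), (m : ℕ) ≠ 0 →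
          x m = extend x' ((m : ℕ) - 2 ^ (k + 1)) := by
        intro m hm
        show ite _ _ _ = _
        rw [if_neg hm]
      have hne : idx0 k ≠ i := by
        intro hEq
        have := congrArg Fin.val hEq
        simp [idx0] at this
        omega
      have hz : x (idx0 k) = true := by
        show ite _ _ _ = true
        rw [if_pos (by simp [idx0])]
      have hzf : flipBit x i (idx0 k) = true := by
        rw [flipBit_apply, if_neg hne, hz]
      rw [famF_succ, famF_succ, hz, hzf, if_pos rfl, if_pos rfl]
      have hidxR : ∀ j' : Fin (2 ^ (k + 1) - 1), ((idxR k j' : ℕ)) = 2 ^ (k + 1) + (j' : ℕ) := by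
        intro j'; simp [idxR]; omega
      have hR : (fun j' => x (idxR k j')) = x' := by
        funext j'
        rw [hxval (idxR k j') (by rw [hidxR]; omega), hidxR]
        rw [show 2 ^ (k + 1) + (j' : ℕ) - 2 ^ (k + 1) = (j' : ℕ) by omega]
        exact extend_val x' j'
      have hRf : (fun j' => flipBit x i (idxR k j')) = flipBit x' j := by
        funext j'
        rw [flipBit_apply, flipBit_apply]
        by_cases hjj : j' = j
        · subst hjj
          rw [if_pos (Fin.ext (by rw [hidxR]; simp [hj]; omega)), if_pos rfl]
          congr 1
          rw [hxval i (by omega)]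
          rw [show (i : ℕ) - 2 ^ (k + 1) = ((j : Fin (2 ^ (k + 1) - 1)) : ℕ) by simp [hj]]
          exact extend_val x' j
        · rw [if_neg, if_neg hjj]
          · exact congrFun hR j'
          · intro hEq
            apply hjj
            have hv : 2 ^ (k + 1) + (j' : ℕ) = (i : ℕ) := by
              rw [← hidxR j']; exact congrArg Fin.val hEq
            exact Fin.ext (by simp [hj]; omega)
      rw [hR, hRf]
      exact hx'

lemma DT_famF (k : ℕ) : DT (famF (k + 1)) = k + 1 := by
  have hmem : (k + 1) ∈ {d | ∃ t : DTree (2 ^ (k + 1) - 1), (∀ x, t.eval x = famF (k + 1) x) ∧ t.depth = d} :=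
    ⟨treeF k, eval_treeF k, depth_treeF k⟩
  refine le_antisymm (Nat.sInf_le hmem) ?_
  apply le_csInf ⟨k + 1, hmem⟩
  rintro d ⟨t, ht, rfl⟩
  have hsub : (Finset.univ : Finset (Fin (2 ^ (k + 1) - 1))) ⊆ t.vars := by
    intro i _
    obtain ⟨x, hx⟩ := famF_sensitive k i
    exact mem_vars_of_sensitive t _ ht i x hx
  have hcard : (Finset.univ : Finset (Fin (2 ^ (k + 1) - 1))).card ≤ t.vars.card :=
    Finset.card_le_card hsub
  rw [Finset.card_univ, Fintype.card_fin] at hcard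
  have h2 := DTree.card_vars_le t
  have hle : 2 ^ (k + 1) ≤ 2 ^ t.depth := by
    have := Nat.two_pow_pos (k + 1)
    have := Nat.two_pow_pos t.depth
    omega
  exact le_of_not_gt fun hlt => absurd hle (not_le.mpr (Nat.pow_lt_pow_right (by norm_num) hlt))


/- ===================== The alternating chain ===================== -/

/-- The building block for the alternating-chain permutation: on `Fin (n+1+n)`,
variable `0` (the root) gets time `n`, left-block variable `1+j` gets time `σ j`,
and right-block variable `n+1+j` gets time `n+1+σ j`. -/
def bigFun {n : ℕ} (σ : Equiv.Perm (Fin n)) (i : Fin (n + 1 + n)) : Fin (n + 1 + n) :=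
  if h0 : (i : ℕ) = 0 then ⟨n, by omega⟩
  else if h1 : (i : ℕ) ≤ n then
    ⟨(σ ⟨(i : ℕ) - 1, by omega⟩ : ℕ), by
      have := (σ ⟨(i : ℕ) - 1, by omega⟩).isLt; omega⟩
  else
    ⟨n + 1 + (σ ⟨(i : ℕ) - (n + 1), by have := i.isLt; omega⟩ : ℕ), by
      have := (σ ⟨(i : ℕ) - (n + 1), by have := i.isLt; omega⟩).isLt; omega⟩

lemma bigFun_val0 {n : ℕ} (σ : Equiv.Perm (Fin n)) (i : Fin (n + 1 + n))
    (h : (i : ℕ) = 0) : (bigFun σ i : ℕ) = n := by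
  rw [bigFun, dif_pos h]

lemma bigFun_valL {n : ℕ} (σ : Equiv.Perm (Fin n)) (i : Fin (n + 1 + n)) (j : Fin n)
    (h : (i : ℕ) = 1 + (j : ℕ)) : (bigFun σ i : ℕ) = (σ j : ℕ) := by
  have hj := j.isLt
  rw [bigFun, dif_neg (by omega), dif_pos (by omega)]
  exact congrArg (fun z : Fin n => (σ z : ℕ))
    (Fin.ext (show (i : ℕ) - 1 = (j : ℕ) by omega))

lemma bigFun_valR {n : ℕ} (σ : Equiv.Perm (Fin n)) (i : Fin (n + 1 + n)) (j : Fin n)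
    (h : (i : ℕ) = n + 1 + (j : ℕ)) : (bigFun σ i : ℕ) = n + 1 + (σ j : ℕ) := by
  have hj := j.isLt
  rw [bigFun, dif_neg (by omega), dif_neg (by omega)]
  exact congrArg (fun z : Fin n => n + 1 + (σ z : ℕ))
    (Fin.ext (show (i : ℕ) - (n + 1) = (j : ℕ) by omega))

lemma bigFun_injective {n : ℕ} (σ : Equiv.Perm (Fin n)) : Function.Injective (bigFun σ) := by
  intro a b h
  have hv : (bigFun σ a : ℕ) = (bigFun σ b : ℕ) := congrArg Fin.val h
  have classify : ∀ i : Fin (n + 1 + n), (i : ℕ) = 0 ∨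
      (∃ j : Fin n, (i : ℕ) = 1 + (j : ℕ)) ∨ (∃ j : Fin n, (i : ℕ) = n + 1 + (j : ℕ)) := by
    intro i
    have := i.isLt
    rcases Nat.lt_or_ge (i : ℕ) 1 with h1 | h1
    · left; omega
    · rcases Nat.lt_or_ge (i : ℕ) (n + 1) with h2 | h2
      · right; left; exact ⟨⟨(i : ℕ) - 1, by omega⟩, by simp; omega⟩
      · right; right; exact ⟨⟨(i : ℕ) - (n + 1), by omega⟩, by simp; omega⟩
  rcases classify a with ha | ⟨ja, ha⟩ | ⟨ja, ha⟩ <;>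
    rcases classify b with hb | ⟨jb, hb⟩ | ⟨jb, hb⟩
  · exact Fin.ext (by omega)
  · rw [bigFun_val0 σ a ha, bigFun_valL σ b jb hb] at hv
    exact absurd hv (by have := (σ jb).isLt; omega)
  · rw [bigFun_val0 σ a ha, bigFun_valR σ b jb hb] at hv
    exact absurd hv (by have := (σ jb).isLt; omega)
  · rw [bigFun_valL σ a ja ha, bigFun_val0 σ b hb] at hv
    exact absurd hv (by have := (σ ja).isLt; omega)
  · rw [bigFun_valL σ a ja ha, bigFun_valL σ b jb hb] at hv
    have : ja = jb := σ.injective (Fin.ext hv)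
    exact Fin.ext (by rw [ha, hb, this])
  · rw [bigFun_valL σ a ja ha, bigFun_valR σ b jb hb] at hv
    exact absurd hv (by have := (σ ja).isLt; omega)
  · rw [bigFun_valR σ a ja ha, bigFun_val0 σ b hb] at hv
    exact absurd hv (by have := (σ ja).isLt; omega)
  · rw [bigFun_valR σ a ja ha, bigFun_valL σ b jb hb] at hv
    exact absurd hv (by have := (σ jb).isLt; omega)
  · rw [bigFun_valR σ a ja ha, bigFun_valR σ b jb hb] at hv
    have : ja = jb := σ.injective (Fin.ext (by omega))
    exact Fin.ext (by rw [ha, hb, this])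

/-- The alternating-chain permutation on `Fin (n+1+n)`. -/
noncomputable def bigPerm {n : ℕ} (σ : Equiv.Perm (Fin n)) : Equiv.Perm (Fin (n + 1 + n)) :=
  Equiv.ofBijective (bigFun σ) (Finite.injective_iff_bijective.mp (bigFun_injective σ))

lemma bigPerm_apply {n : ℕ} (σ : Equiv.Perm (Fin n)) (i : Fin (n + 1 + n)) :
    bigPerm σ i = bigFun σ i := rfl

/-- Along the chain of a suitable permutation, `famF (k+1)` alternates at every step. -/
lemma chain_famF (k : ℕ) : ∃ σ : Equiv.Perm (Fin (2 ^ (k + 1) - 1)),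
    ∀ t : Fin (2 ^ (k + 1) - 1 + 1), famF (k + 1) (chainOf σ t) = decide ((t : ℕ) % 2 = 1) := by
  induction k with
  | zero =>
    refine ⟨Equiv.refl _, fun t => ?_⟩
    rw [famF_one]
    show decide ((Equiv.refl (Fin (2 ^ 1 - 1)) ⟨0, by norm_num⟩ : ℕ) < (t : ℕ)) = _
    have ht := t.isLt
    rw [Equiv.refl_apply, decide_eq_decide]
    show 0 < (t : ℕ) ↔ _
    omega
  | succ k ih =>
    obtain ⟨σ', hσ'⟩ := ih
    have hpow : 2 ^ (k + 2) = 2 * 2 ^ (k + 1) := by ring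
    have hp1 : 0 < 2 ^ (k + 1) := Nat.two_pow_pos _
    have hsz : (2 ^ (k + 1) - 1) + 1 + (2 ^ (k + 1) - 1) = 2 ^ (k + 2) - 1 := by omega
    refine ⟨(finCongr hsz).permCongr (bigPerm σ'), fun t => ?_⟩
    set σ : Equiv.Perm (Fin (2 ^ (k + 2) - 1)) := (finCongr hsz).permCongr (bigPerm σ') with hσdef
    have hval : ∀ i : Fin (2 ^ (k + 2) - 1),
        (σ i : ℕ) = (bigFun σ' ⟨(i : ℕ), by rw [hsz]; exact i.isLt⟩ : ℕ) := fun i => rfl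
    have ht := t.isLt
    show famF (k + 2) (chainOf σ t) = decide ((t : ℕ) % 2 = 1)
    rw [famF_succ]
    have hroot : (σ (idx0 k) : ℕ) = 2 ^ (k + 1) - 1 := by
      rw [hval, bigFun_val0]
      simp [idx0]
    rcases Nat.lt_or_ge (2 ^ (k + 1) - 1) (t : ℕ) with hc | hc
    · -- right half of the chain
      have hz : chainOf σ t (idx0 k) = true := by
        show decide ((σ (idx0 k) : ℕ) < (t : ℕ)) = true
        rw [hroot, decide_eq_true_eq]
        exact hc
      rw [hz, if_pos rfl]
      have hbr : (fun j => chainOf σ t (idxR k j)) =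
          chainOf σ' ⟨(t : ℕ) - 2 ^ (k + 1), by omega⟩ := by
        funext j
        show decide ((σ (idxR k j) : ℕ) < (t : ℕ)) = decide ((σ' j : ℕ) < _)
        rw [hval, bigFun_valR σ' _ j (by simp [idxR]; omega)]
        rw [decide_eq_decide]
        show _ ↔ (σ' j : ℕ) < (t : ℕ) - 2 ^ (k + 1)
        omega
      rw [hbr, hσ']
      rw [decide_eq_decide]
      show ((t : ℕ) - 2 ^ (k + 1)) % 2 = 1 ↔ (t : ℕ) % 2 = 1
      have hpow1 : 2 ^ (k + 1) = 2 * 2 ^ k := by ring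
      omega
    · -- left half of the chain
      have hz : chainOf σ t (idx0 k) = false := by
        show decide ((σ (idx0 k) : ℕ) < (t : ℕ)) = false
        rw [hroot, decide_eq_false_iff_not]
        omega
      rw [hz, if_neg Bool.false_ne_true]
      have hbr : (fun j => chainOf σ t (idxL k j)) =
          chainOf σ' ⟨(t : ℕ), by omega⟩ := by
        funext j
        show decide ((σ (idxL k j) : ℕ) < (t : ℕ)) = decide ((σ' j : ℕ) < _)
        rw [hval, bigFun_valL σ' _ j (by simp [idxL])]
      rw [hbr, hσ']

lemma alt_famF (k : ℕ) : alt (famF (k + 1)) = 2 ^ (k + 1) - 1 := by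
  obtain ⟨σ, hσ⟩ := chain_famF k
  apply le_antisymm
  · apply Finset.sup_le
    intro σ' _
    calc altOn (famF (k + 1)) σ'
        ≤ (Finset.univ : Finset (Fin (2 ^ (k + 1) - 1))).card := Finset.card_filter_le _ _
      _ = 2 ^ (k + 1) - 1 := by simp
  · have hfull : altOn (famF (k + 1)) σ = 2 ^ (k + 1) - 1 := by
      rw [altOn, Finset.filter_true_of_mem, Finset.card_univ, Fintype.card_fin]
      intro m _
      rw [hσ, hσ]
      simp only [ne_eq, decide_eq_decide, Fin.coe_castSucc, Fin.val_succ]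
      omega
    have hle := Finset.le_sup (f := altOn (famF (k + 1))) (Finset.mem_univ σ)
    rwa [hfull] at hle

/-- For every `k ≥ 1`, the function `f_k` of the family `F`
satisfies `alt (f_k) = 2 ^ k - 1`, i.e. `alt (f_k) = 2 ^ DT (f_k) - 1`. -/
theorem alt_famF_eq (k : ℕ) (hk : 1 ≤ k) :
    alt (famF k) = 2 ^ k - 1 ∧ alt (famF k) = 2 ^ DT (famF k) - 1 := by
  cases k with
  | zero => omega
  | succ m => exact ⟨alt_famF m, by rw [alt_famF m, DT_famF m]⟩
end

section
/- For any Boolean functions g:{0,1}^n→{0,1} with g(0^n) ≠ g(1^n) and f:{0,1}^m→{0,1}, the composition satisfies alt(f ∘ g) ≥ alt(f) · alt(g). -/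
open Finset

private lemma my_bool_inj {h : Bool → Bool} {u v : Bool} (huv : h u ≠ h v) {x y : Bool}
    (hxy : x ≠ y) : h x ≠ h y := by
  have key : h false ≠ h true := by
    cases u <;> cases v
    · exact absurd rfl huv
    · exact huv
    · exact Ne.symm huv
    · exact absurd rfl huv
  cases x <;> cases y
  · exact absurd rfl hxy
  · exact key
  · exact Ne.symm key
  · exact absurd rfl hxy

/-- The effective one-block function. -/
private def Hfun {m : ℕ} (f : (Fin m → Bool) → Bool) (σf : Equiv.Perm (Fin m))
    (b0 b1 : Bool) (a : ℕ) (v : Bool) : Bool :=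
  f (fun i => if ((σf i : ℕ)) < a then b1 else if ((σf i : ℕ)) = a then v else b0)

/-- The product permutation giving the composed chain. -/
private def tauP {m n : ℕ} (σf : Equiv.Perm (Fin m)) (σg : Equiv.Perm (Fin n)) :
    Equiv.Perm (Fin (m * n)) :=
  finProdFinEquiv.symm.trans ((σf.prodCongr σg).trans finProdFinEquiv)

private lemma tauP_apply {m n : ℕ} (σf : Equiv.Perm (Fin m)) (σg : Equiv.Perm (Fin n))
    (i : Fin m) (j : Fin n) :
    ((tauP σf σg (finProdFinEquiv (i, j))) : ℕ) = (σg j : ℕ) + n * (σf i : ℕ) := by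
  rw [tauP, Equiv.trans_apply, Equiv.symm_apply_apply, Equiv.trans_apply, Equiv.prodCongr_apply]
  simp [finProdFinEquiv]

private lemma comp_chain_val {m n : ℕ} (f : (Fin m → Bool) → Bool) (g : (Fin n → Bool) → Bool)
    (σf : Equiv.Perm (Fin m)) (σg : Equiv.Perm (Fin n))
    (t : Fin (m * n + 1)) (a b : ℕ) (hb : b ≤ n) (ht : (t : ℕ) = n * a + b) :
    comp f g (chainOf (tauP σf σg) t) =
      Hfun f σf (g (fun _ => false)) (g (fun _ => true)) a
        (g (fun j => decide ((σg j : ℕ) < b))) := by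
  show f _ = f _
  congr 1
  funext i
  show g _ = _
  rcases lt_trichotomy ((σf i : ℕ)) a with h | h | h
  · have hx : (fun j => chainOf (tauP σf σg) t (finProdFinEquiv (i, j))) = (fun _ => true) := by
      funext j
      have h1 : n * ((σf i : ℕ) + 1) ≤ n * a := Nat.mul_le_mul_left n h
      have h2 := (σg j).isLt
      simp only [chainOf, tauP_apply, decide_eq_true_eq]
      have h3 : n * ((σf i : ℕ) + 1) = n * (σf i : ℕ) + n := Nat.mul_succ n _
      omega
    rw [hx, if_pos h]
  · have hx : (fun j => chainOf (tauP σf σg) t (finProdFinEquiv (i, j))) =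
        (fun j => decide ((σg j : ℕ) < b)) := by
      funext j
      simp only [chainOf, tauP_apply, h]
      exact decide_eq_decide.mpr (by omega)
    rw [hx, if_neg (by omega), if_pos h]
  · have hx : (fun j => chainOf (tauP σf σg) t (finProdFinEquiv (i, j))) = (fun _ => false) := by
      funext j
      have h1 : n * (a + 1) ≤ n * (σf i : ℕ) := Nat.mul_le_mul_left n h
      have h3 : n * (a + 1) = n * a + n := Nat.mul_succ n _
      simp only [chainOf, tauP_apply, decide_eq_false_iff_not]
      omega
    rw [hx, if_neg (by omega), if_neg (by omega)]

private lemma Hfun_b0 {m : ℕ} (f : (Fin m → Bool) → Bool) (σf : Equiv.Perm (Fin m))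
    (b0 b1 : Bool) (a : Fin m) :
    Hfun f σf b0 b1 (a : ℕ) b0 =
      (fun y => f (fun i => if y i then b1 else b0)) (chainOf σf a.castSucc) := by
  show f _ = f _
  congr 1
  funext i
  simp only [chainOf, Fin.coe_castSucc]
  by_cases h : (σf i : ℕ) < (a : ℕ)
  · simp [h]
  · simp [h]

private lemma Hfun_b1 {m : ℕ} (f : (Fin m → Bool) → Bool) (σf : Equiv.Perm (Fin m))
    (b0 b1 : Bool) (a : Fin m) :
    Hfun f σf b0 b1 (a : ℕ) b1 =
      (fun y => f (fun i => if y i then b1 else b0)) (chainOf σf a.succ) := by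
  show f _ = f _
  congr 1
  funext i
  simp only [chainOf, Fin.val_succ]
  by_cases h : (σf i : ℕ) < (a : ℕ)
  · simp [h, show (σf i : ℕ) < (a : ℕ) + 1 by omega]
  · by_cases h2 : (σf i : ℕ) = (a : ℕ)
    · simp [h, h2]
    · simp [h, h2, show ¬ ((σf i : ℕ) < (a : ℕ) + 1) by omega]

private lemma my_altOn_neg {m : ℕ} (f : (Fin m → Bool) → Bool) (σ : Equiv.Perm (Fin m)) :
    altOn f σ = altOn (fun x => f (fun i => !(x i))) (σ.trans Fin.revPerm) := by
  have key : ∀ t : Fin (m + 1),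
      f (fun i => !(chainOf (σ.trans Fin.revPerm) t i)) = f (chainOf σ t.rev) := by
    intro t
    congr 1
    funext i
    simp only [chainOf, Equiv.trans_apply, Fin.revPerm_apply]
    have h1 : ((σ i).rev : ℕ) = m - 1 - (σ i : ℕ) := by rw [Fin.val_rev]; omega
    have h2 : ((t.rev : Fin (m+1)) : ℕ) = m - (t : ℕ) := by rw [Fin.val_rev]; omega
    have h3 := (σ i).isLt
    have h4 := t.isLt
    have hiff : (¬ (((σ i).rev : ℕ) < (t : ℕ))) ↔ ((σ i : ℕ) < ((t.rev : Fin (m+1)) : ℕ)) := by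
      rw [h1, h2]; omega
    rw [← decide_not]
    exact decide_eq_decide.mpr hiff
  rw [altOn, altOn]
  have step : ∀ k : Fin m,
      ((fun x => f (fun i => !(x i))) (chainOf (σ.trans Fin.revPerm) k.castSucc) ≠
        (fun x => f (fun i => !(x i))) (chainOf (σ.trans Fin.revPerm) k.succ)) ↔
      (f (chainOf σ k.rev.castSucc) ≠ f (chainOf σ k.rev.succ)) := by
    intro k
    show (f (fun i => !(chainOf _ k.castSucc i)) ≠ f (fun i => !(chainOf _ k.succ i))) ↔ _
    rw [key, key, Fin.rev_castSucc, Fin.rev_succ]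
    exact ne_comm
  rw [Finset.filter_congr (fun k _ => step k)]
  apply Finset.card_bij' (fun k _ => k.rev) (fun k _ => k.rev) ?_ ?_
    (fun k _ => Fin.rev_rev k) (fun k _ => Fin.rev_rev k)
  · intro k hk
    simp only [Finset.mem_filter, Finset.mem_univ, true_and] at hk ⊢
    simpa [Fin.rev_rev] using hk
  · intro k hk
    simp only [Finset.mem_filter, Finset.mem_univ, true_and] at hk ⊢
    exact hk

private lemma my_alt_neg {m : ℕ} (f : (Fin m → Bool) → Bool) :
    alt f ≤ alt (fun x => f (fun i => !(x i))) := by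
  rw [alt, alt]
  apply Finset.sup_le
  intro σ _
  rw [my_altOn_neg f σ]
  exact Finset.le_sup (Finset.mem_univ _)

private lemma my_main {m n : ℕ} (f : (Fin m → Bool) → Bool) (g : (Fin n → Bool) → Bool)
    (hn : 0 < n) (σf : Equiv.Perm (Fin m)) (σg : Equiv.Perm (Fin n)) :
    altOn (fun y => f (fun i => if y i then g (fun _ => true) else g (fun _ => false))) σf
      * altOn g σg ≤ altOn (comp f g) (tauP σf σg) := by
  classical
  set b0 := g (fun _ => false) with hb0
  set b1 := g (fun _ => true) with hb1
  -- Step A: rewrite altOn of the composition as a double count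
  have hcount : altOn (comp f g) (tauP σf σg) =
      ∑ a : Fin m, (Finset.univ.filter (fun b : Fin n =>
        Hfun f σf b0 b1 (a : ℕ) (g (chainOf σg b.castSucc)) ≠
        Hfun f σf b0 b1 (a : ℕ) (g (chainOf σg b.succ)))).card := by
    rw [altOn, Finset.card_filter]
    rw [← Equiv.sum_comp (finProdFinEquiv : Fin m × Fin n ≃ Fin (m * n))]
    rw [Fintype.sum_prod_type]
    refine Finset.sum_congr rfl (fun a _ => ?_)
    rw [Finset.card_filter]
    refine Finset.sum_congr rfl (fun b _ => ?_)
    have hk : ((finProdFinEquiv (a, b) : Fin (m * n)) : ℕ) = (b : ℕ) + n * (a : ℕ) := by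
      simp [finProdFinEquiv]
    have h1 : comp f g (chainOf (tauP σf σg) (finProdFinEquiv (a, b)).castSucc) =
        Hfun f σf b0 b1 (a : ℕ) (g (chainOf σg b.castSucc)) := by
      rw [comp_chain_val f g σf σg _ (a : ℕ) (b : ℕ) (le_of_lt b.isLt)
        (by rw [Fin.coe_castSucc, hk]; omega)]
      rfl
    have h2 : comp f g (chainOf (tauP σf σg) (finProdFinEquiv (a, b)).succ) =
        Hfun f σf b0 b1 (a : ℕ) (g (chainOf σg b.succ)) := by
      rw [comp_chain_val f g σf σg _ (a : ℕ) ((b : ℕ) + 1) b.isLt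
        (by rw [Fin.val_succ, hk]; omega)]
      rfl
    simp only [h1, h2]
  -- Step B: per-block lower bound
  have hperA : ∀ a : Fin m,
      (if Hfun f σf b0 b1 (a : ℕ) b0 ≠ Hfun f σf b0 b1 (a : ℕ) b1 then altOn g σg else 0) ≤
      (Finset.univ.filter (fun b : Fin n =>
        Hfun f σf b0 b1 (a : ℕ) (g (chainOf σg b.castSucc)) ≠
        Hfun f σf b0 b1 (a : ℕ) (g (chainOf σg b.succ)))).card := by
    intro a
    by_cases hA : Hfun f σf b0 b1 (a : ℕ) b0 ≠ Hfun f σf b0 b1 (a : ℕ) b1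
    · rw [if_pos hA, altOn]
      refine Finset.card_le_card (Finset.monotone_filter_right _ (fun b _ hb => ?_))
      exact my_bool_inj hA hb
    · rw [if_neg hA]
      exact Nat.zero_le _
  -- Step C: number of sensitive blocks equals altOn of the transported f
  have hAset : (Finset.univ.filter (fun a : Fin m =>
      Hfun f σf b0 b1 (a : ℕ) b0 ≠ Hfun f σf b0 b1 (a : ℕ) b1)).card =
      altOn (fun y => f (fun i => if y i then b1 else b0)) σf := by
    rw [altOn]
    congr 1
    apply Finset.filter_congr
    intro a _
    rw [Hfun_b0 f σf b0 b1 a, Hfun_b1 f σf b0 b1 a]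
  calc altOn (fun y => f (fun i => if y i then b1 else b0)) σf * altOn g σg
      = ∑ a ∈ Finset.univ.filter (fun a : Fin m =>
          Hfun f σf b0 b1 (a : ℕ) b0 ≠ Hfun f σf b0 b1 (a : ℕ) b1), altOn g σg := by
        rw [Finset.sum_const, smul_eq_mul, hAset]
    _ = ∑ a : Fin m, (if Hfun f σf b0 b1 (a : ℕ) b0 ≠ Hfun f σf b0 b1 (a : ℕ) b1
          then altOn g σg else 0) := by rw [Finset.sum_filter]
    _ ≤ ∑ a : Fin m, (Finset.univ.filter (fun b : Fin n =>
          Hfun f σf b0 b1 (a : ℕ) (g (chainOf σg b.castSucc)) ≠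
          Hfun f σf b0 b1 (a : ℕ) (g (chainOf σg b.succ)))).card :=
        Finset.sum_le_sum (fun a _ => hperA a)
    _ = altOn (comp f g) (tauP σf σg) := hcount.symm

/-- For any Boolean functions `g : {0,1}ⁿ → {0,1}` with
`g 0ⁿ ≠ g 1ⁿ` and `f : {0,1}ᵐ → {0,1}`, `alt (f ∘ g) ≥ alt f * alt g`. -/
theorem alt_comp_ge {m n : ℕ} (f : (Fin m → Bool) → Bool) (g : (Fin n → Bool) → Bool)
    (hg : g (fun _ => false) ≠ g (fun _ => true)) :
    alt f * alt g ≤ alt (comp f g) := by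
  classical
  have hn : 0 < n := by
    rcases Nat.eq_zero_or_pos n with h | h
    · subst h
      exact absurd (congrArg g (funext fun j => j.elim0)) hg
    · exact h
  obtain ⟨σg, -, hσg⟩ := Finset.exists_mem_eq_sup (Finset.univ : Finset (Equiv.Perm (Fin n)))
    ⟨1, Finset.mem_univ 1⟩ (altOn g)
  by_cases h0 : g (fun _ => false) = false
  · have h1 : g (fun _ => true) = true := by
      cases hgt : g (fun _ => true)
      · exact absurd (h0.trans hgt.symm) hg
      · rfl
    have hfb : (fun y : Fin m → Bool =>
        f (fun i => if y i then g (fun _ => true) else g (fun _ => false))) = f := by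
      funext y
      congr 1
      funext i
      rw [h0, h1]
      cases y i <;> simp
    obtain ⟨σf, -, hσf⟩ := Finset.exists_mem_eq_sup (Finset.univ : Finset (Equiv.Perm (Fin m)))
      ⟨1, Finset.mem_univ 1⟩ (altOn f)
    have hmain := my_main f g hn σf σg
    rw [hfb] at hmain
    calc alt f * alt g = altOn f σf * altOn g σg := by unfold alt; rw [hσf, hσg]
      _ ≤ altOn (comp f g) (tauP σf σg) := hmain
      _ ≤ alt (comp f g) := Finset.le_sup (Finset.mem_univ _)
  · have h0' : g (fun _ => false) = true := by
      cases hgt : g (fun _ => false)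
      · exact absurd hgt h0
      · rfl
    have h1 : g (fun _ => true) = false := by
      cases hgt : g (fun _ => true)
      · rfl
      · exact absurd (h0'.trans hgt.symm) hg
    set fneg := fun x : Fin m → Bool => f (fun i => !(x i)) with hfneg
    have hfb : (fun y : Fin m → Bool =>
        f (fun i => if y i then g (fun _ => true) else g (fun _ => false))) = fneg := by
      funext y
      congr 1
      funext i
      rw [h0', h1]
      cases y i <;> simp
    obtain ⟨σf, -, hσf⟩ := Finset.exists_mem_eq_sup (Finset.univ : Finset (Equiv.Perm (Fin m)))
      ⟨1, Finset.mem_univ 1⟩ (altOn fneg)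
    have hmain := my_main f g hn σf σg
    rw [hfb] at hmain
    calc alt f * alt g ≤ alt fneg * alt g := mul_le_mul_left (my_alt_neg f) _
      _ = altOn fneg σf * altOn g σg := by unfold alt; rw [hσf, hσg]
      _ ≤ altOn (comp f g) (tauP σf σg) := hmain
      _ ≤ alt (comp f g) := Finset.le_sup (Finset.mem_univ _)
end

section
/- The address function ADDR_2 satisfies s(ADDR_2) = 3 and alt(ADDR_2) ≥ 5. -/
open Finset

def sensAltSigma0 : Equiv.Perm (Fin 6) :=
  ⟨![3,1,0,2,5,4], ![2,1,3,0,5,4], by decide, by decide⟩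

set_option maxRecDepth 10000 in
/-- The address function `ADDR₂` satisfies `s (ADDR₂) = 3` and
`alt (ADDR₂) ≥ 5`. -/
theorem sens_alt_ADDR2 : sens ADDR2 = 3 ∧ 5 ≤ alt ADDR2 := by
  constructor
  · decide
  · have h : altOn ADDR2 sensAltSigma0 = 5 := by decide
    calc 5 = altOn ADDR2 sensAltSigma0 := h.symm
    _ ≤ alt ADDR2 := Finset.le_sup (Finset.mem_univ sensAltSigma0)
end

section
/- Let f:{0,1}^n→{0,1} depend on all its inputs. Then deg(f) · √(sparsity(f)) ≥ n. -/
open Finset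

/-! ### Auxiliary Fourier-analytic development for Statement 13 -/

namespace BF

variable {n : ℕ}

noncomputable section

/-- The character `χ_S` as a product. -/
def chi (S : Finset (Fin n)) (x : Fin n → Bool) : ℝ :=
  ∏ i : Fin n, (if i ∈ S then (if x i then (-1 : ℝ) else 1) else 1)

lemma chi_eq (S : Finset (Fin n)) (x : Fin n → Bool) :
    ((-1 : ℝ) ^ (S.filter fun i => x i = true).card) = chi S x := by
  rw [chi, Finset.prod_ite_mem, Finset.univ_inter, ← Finset.prod_const, Finset.prod_filter]

lemma bFourier_eq (g : (Fin n → Bool) → ℝ) (S : Finset (Fin n)) :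
    bFourier g S = (∑ x : Fin n → Bool, g x * chi S x) / 2 ^ n := by
  unfold bFourier
  congr 1
  exact Finset.sum_congr rfl fun x _ => by rw [chi_eq]

lemma abs_chi (S : Finset (Fin n)) (x : Fin n → Bool) : |chi S x| = 1 := by
  rw [← chi_eq, abs_pow, abs_neg, abs_one, one_pow]

lemma cube_sum (e : Fin n → Bool → ℝ) :
    ∑ x : Fin n → Bool, ∏ i, e i (x i) = ∏ i, (e i true + e i false) := by
  rw [← Fintype.prod_sum]
  exact Finset.prod_congr rfl fun i _ => by simp

lemma sum_chi_chi (x y : Fin n → Bool) :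
    ∑ S : Finset (Fin n), chi S x * chi S y = if x = y then (2 : ℝ) ^ n else 0 := by
  set w : Fin n → ℝ := fun i => (if x i then (-1 : ℝ) else 1) * (if y i then (-1 : ℝ) else 1)
    with hw
  have h : ∀ S : Finset (Fin n), chi S x * chi S y = ∏ i ∈ S, w i := by
    intro S
    rw [chi, chi, ← Finset.prod_mul_distrib]
    have e : ∀ i ∈ Finset.univ, (if i ∈ S then (if x i then (-1 : ℝ) else 1) else 1) *
        (if i ∈ S then (if y i then (-1 : ℝ) else 1) else 1) = if i ∈ S then w i else 1 := by
      intro i _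
      by_cases h : i ∈ S <;> simp [h, hw]
    rw [Finset.prod_congr rfl e, Finset.prod_ite_mem, Finset.univ_inter]
  simp_rw [h]
  have h2 : ∑ S : Finset (Fin n), ∏ i ∈ S, w i = ∏ i, (w i + 1) := by
    rw [Fintype.prod_add w (fun _ => (1 : ℝ))]
    exact Finset.sum_congr rfl fun t _ => by simp
  rw [h2]
  by_cases hxy : x = y
  · subst hxy
    rw [if_pos rfl]
    have : ∀ i : Fin n, w i + 1 = 2 := by
      intro i
      by_cases h : x i <;> simp [hw, h] <;> norm_num
    calc ∏ i : Fin n, (w i + 1) = ∏ _i : Fin n, (2 : ℝ) := Finset.prod_congr rfl fun i _ => this i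
      _ = 2 ^ n := by simp
  · rw [if_neg hxy]
    have : ∃ i, x i ≠ y i := by
      by_contra hco
      push_neg at hco
      exact hxy (funext hco)
    obtain ⟨i, hi⟩ := this
    apply Finset.prod_eq_zero (Finset.mem_univ i)
    cases hx : x i <;> cases hy : y i <;> simp [hx, hy] at hi ⊢ <;> simp [hw, hx, hy]

lemma inversion (g : (Fin n → Bool) → ℝ) (x : Fin n → Bool) :
    ∑ S : Finset (Fin n), bFourier g S * chi S x = g x := by
  simp_rw [bFourier_eq, div_mul_eq_mul_div, Finset.sum_mul, ← Finset.sum_div]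
  rw [Finset.sum_comm]
  have h : ∀ y, ∑ S : Finset (Fin n), g y * chi S y * chi S x
      = g y * (if y = x then (2 : ℝ) ^ n else 0) := by
    intro y
    rw [← sum_chi_chi y x, Finset.mul_sum]
    exact Finset.sum_congr rfl fun S _ => by ring
  simp_rw [h, mul_ite, mul_zero]
  rw [Finset.sum_ite_eq' Finset.univ x (fun y => g y * 2 ^ n)]
  simp only [Finset.mem_univ, if_pos]
  have h2 : (2 : ℝ) ^ n ≠ 0 := by positivity
  field_simp

lemma parseval (g h : (Fin n → Bool) → ℝ) :
    ∑ x : Fin n → Bool, g x * h x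
      = 2 ^ n * ∑ S : Finset (Fin n), bFourier g S * bFourier h S := by
  have e0 : ∀ x, g x * h x = ∑ S : Finset (Fin n), bFourier g S * chi S x * h x := by
    intro x
    rw [← Finset.sum_mul, inversion g x]
  simp_rw [e0]
  rw [Finset.sum_comm, Finset.mul_sum]
  apply Finset.sum_congr rfl
  intro S _
  have e : ∑ x : Fin n → Bool, bFourier g S * chi S x * h x
      = bFourier g S * ∑ x : Fin n → Bool, h x * chi S x := by
    rw [Finset.mul_sum]
    exact Finset.sum_congr rfl fun x _ => by ring
  rw [e, bFourier_eq h]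
  have h2 : (2 : ℝ) ^ n ≠ 0 := by positivity
  field_simp

lemma toPM_eq (f : (Fin n → Bool) → Bool) (x : Fin n → Bool) :
    toPM f x = if f x then (-1 : ℝ) else 1 := by
  unfold toPM
  by_cases h : f x <;> simp [h] <;> norm_num

lemma card_cube : (Fintype.card (Fin n → Bool) : ℝ) = 2 ^ n := by
  simp [Fintype.card_fun]

lemma parseval_toPM (f : (Fin n → Bool) → Bool) :
    ∑ S : Finset (Fin n), bFourier (toPM f) S ^ 2 = 1 := by
  have h := parseval (toPM f) (toPM f)
  have h1 : ∀ x : Fin n → Bool, toPM f x * toPM f x = 1 := by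
    intro x
    rw [toPM_eq]
    by_cases hf : f x <;> simp [hf]
  simp_rw [h1, ← sq] at h
  rw [Finset.sum_const, Finset.card_univ, nsmul_eq_mul, mul_one] at h
  have h2 : (2 : ℝ) ^ n ≠ 0 := by positivity
  apply mul_left_cancel₀ h2
  rw [mul_one, ← h, card_cube]

lemma fourier_mono_eq_zero (T S : Finset (Fin n)) (h : ¬ S ⊆ T) :
    ∑ x : Fin n → Bool, (∏ i ∈ T, (if x i then (1 : ℝ) else 0)) * chi S x = 0 := by
  obtain ⟨j, hjS, hjT⟩ := Finset.not_subset.mp h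
  have hrw : ∀ x : Fin n → Bool,
      (∏ i ∈ T, (if x i then (1 : ℝ) else 0)) * chi S x =
      ∏ i, ((if i ∈ T then (if x i then (1 : ℝ) else 0) else 1) *
        (if i ∈ S then (if x i then (-1 : ℝ) else 1) else 1)) := by
    intro x
    have e1 : (∏ i ∈ T, (if x i then (1 : ℝ) else 0))
        = ∏ i : Fin n, (if i ∈ T then (if x i then (1 : ℝ) else 0) else 1) := by
      rw [Finset.prod_ite_mem, Finset.univ_inter]
    rw [e1, chi, ← Finset.prod_mul_distrib]
  simp_rw [hrw]
  rw [cube_sum (fun i b => (if i ∈ T then (if b then (1 : ℝ) else 0) else 1) *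
    (if i ∈ S then (if b then (-1 : ℝ) else 1) else 1))]
  apply Finset.prod_eq_zero (Finset.mem_univ j)
  simp [hjS, hjT]

lemma degree_support (f : (Fin n → Bool) → Bool) (c : Finset (Fin n) → ℝ)
    (hc : Represents c f) (d : ℕ) (hd : ∀ T, c T ≠ 0 → T.card ≤ d)
    (S : Finset (Fin n)) (hS : d < S.card) : bFourier (toPM f) S = 0 := by
  have hg : ∀ x, toPM f x =
      ∑ T : Finset (Fin n), ((if T = ∅ then (1 : ℝ) else 0) - 2 * c T) *
        ∏ i ∈ T, (if x i then (1 : ℝ) else 0) := by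
    intro x
    have e1 : ∑ T : Finset (Fin n), ((if T = ∅ then (1 : ℝ) else 0) - 2 * c T) *
        ∏ i ∈ T, (if x i then (1 : ℝ) else 0) =
        (∑ T : Finset (Fin n), (if T = ∅ then (∏ i ∈ T, (if x i then (1 : ℝ) else 0)) else 0))
        - 2 * mlEval c x := by
      unfold mlEval
      rw [Finset.mul_sum, ← Finset.sum_sub_distrib]
      apply Finset.sum_congr rfl
      intro T _
      by_cases h : T = ∅ <;> simp [h] <;> ring
    rw [e1, Finset.sum_ite_eq' Finset.univ (∅ : Finset (Fin n))]
    simp only [Finset.mem_univ, if_pos, Finset.prod_empty]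
    rw [hc x]
    unfold toPM
    by_cases h : f x <;> simp [h]
  rw [bFourier_eq]
  have hnum : ∑ x : Fin n → Bool, toPM f x * chi S x = 0 := by
    simp_rw [hg, Finset.sum_mul]
    rw [Finset.sum_comm]
    apply Finset.sum_eq_zero
    intro T _
    by_cases hsub : S ⊆ T
    · have hTd : ¬ T.card ≤ d := by
        have := Finset.card_le_card hsub
        omega
      have hcT : c T = 0 := by
        by_contra hne
        exact hTd (hd T hne)
      have hTne : T ≠ ∅ := by
        intro he
        subst he
        have h0 : S = ∅ := Finset.subset_empty.mp hsub
        rw [h0, Finset.card_empty] at hS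
        omega
      simp [hcT, hTne]
    · have h0 := fourier_mono_eq_zero T S hsub
      calc ∑ x : Fin n → Bool, ((if T = ∅ then (1 : ℝ) else 0) - 2 * c T) *
            (∏ i ∈ T, (if x i then (1 : ℝ) else 0)) * chi S x
          = ((if T = ∅ then (1 : ℝ) else 0) - 2 * c T) *
            ∑ x : Fin n → Bool, (∏ i ∈ T, (if x i then (1 : ℝ) else 0)) * chi S x := by
            rw [Finset.mul_sum]
            exact Finset.sum_congr rfl fun x _ => by ring
        _ = 0 := by rw [h0, mul_zero]
  rw [hnum, zero_div]

lemma flipBit_apply_ne (x : Fin n → Bool) (i j : Fin n) (h : j ≠ i) :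
    flipBit x i j = x j := by
  unfold flipBit
  rw [Function.update_of_ne h]

lemma flipBit_apply_self (x : Fin n → Bool) (i : Fin n) :
    flipBit x i i = !(x i) := by
  unfold flipBit
  rw [Function.update_self]

lemma flipBit_involutive (i : Fin n) : Function.Involutive (fun x => flipBit x i) := by
  intro x
  funext j
  by_cases h : j = i
  · subst h
    simp [flipBit_apply_self, flipBit_apply_ne]
  · simp only []
    rw [flipBit_apply_ne _ _ _ h, flipBit_apply_ne _ _ _ h]

lemma chi_flip (S : Finset (Fin n)) (i : Fin n) (x : Fin n → Bool) :
    chi S (flipBit x i) = (if i ∈ S then (-1 : ℝ) else 1) * chi S x := by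
  rw [chi, chi, ← Finset.mul_prod_erase Finset.univ _ (Finset.mem_univ i),
    ← Finset.mul_prod_erase Finset.univ
      (fun j => if j ∈ S then (if x j then (-1 : ℝ) else 1) else 1) (Finset.mem_univ i)]
  have herase : ∏ j ∈ Finset.univ.erase i,
      (if j ∈ S then (if flipBit x i j then (-1 : ℝ) else 1) else 1) =
      ∏ j ∈ Finset.univ.erase i, (if j ∈ S then (if x j then (-1 : ℝ) else 1) else 1) := by
    apply Finset.prod_congr rfl
    intro j hj
    rw [flipBit_apply_ne x i j (Finset.ne_of_mem_erase hj)]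
  rw [herase, flipBit_apply_self, ← mul_assoc]
  congr 1
  by_cases h : i ∈ S
  · cases hx : x i <;> simp [h]
  · simp [h]

lemma bFourier_comp_flip (g : (Fin n → Bool) → ℝ) (i : Fin n) (S : Finset (Fin n)) :
    bFourier (fun x => g (flipBit x i)) S = (if i ∈ S then (-1 : ℝ) else 1) * bFourier g S := by
  rw [bFourier_eq, bFourier_eq, ← mul_div_assoc]
  congr 1
  have key : ∑ x : Fin n → Bool, g (flipBit x i) * chi S x
      = ∑ y : Fin n → Bool, (if i ∈ S then (-1 : ℝ) else 1) * (g y * chi S y) := by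
    apply Fintype.sum_equiv ((flipBit_involutive (n := n) i).toPerm)
    intro x
    simp only [Function.Involutive.coe_toPerm]
    rw [chi_flip]
    by_cases h : i ∈ S <;> simp [h] <;> ring
  rw [key, ← Finset.mul_sum]

lemma bFourier_sub (g h : (Fin n → Bool) → ℝ) (S : Finset (Fin n)) :
    bFourier (fun x => g x - h x) S = bFourier g S - bFourier h S := by
  rw [bFourier_eq, bFourier_eq, bFourier_eq, ← sub_div, ← Finset.sum_sub_distrib]
  congr 1
  exact Finset.sum_congr rfl fun x _ => by ring

open Classical in
/-- The Fourier support of `toPM f`. -/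
def suppW (f : (Fin n → Bool) → Bool) : Finset (Finset (Fin n)) :=
  Finset.univ.filter fun S => bFourier (toPM f) S ≠ 0

lemma mem_suppW (f : (Fin n → Bool) → Bool) (S : Finset (Fin n)) :
    S ∈ suppW f ↔ bFourier (toPM f) S ≠ 0 := by
  unfold suppW
  rw [Finset.mem_filter]
  simp

lemma sparsity_eq (f : (Fin n → Bool) → Bool) : sparsity f = (suppW f).card := by
  unfold sparsity sparsityR suppW
  congr!

lemma coord_ineq (f : (Fin n → Bool) → Bool) (i : Fin n)
    (hdepi : ∃ x, f (flipBit x i) ≠ f x) :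
    1 ≤ (((suppW f).filter fun S => i ∈ S).card : ℝ) *
      ∑ S ∈ Finset.univ.filter (fun S : Finset (Fin n) => i ∈ S), bFourier (toPM f) S ^ 2 := by
  classical
  set g : (Fin n → Bool) → ℝ := toPM f with hg
  set h : (Fin n → Bool) → ℝ := fun x => g x - g (flipBit x i) with hh
  set Q : ℝ := ∑ S ∈ Finset.univ.filter (fun S : Finset (Fin n) => i ∈ S),
    bFourier (toPM f) S ^ 2 with hQdef
  set F : Finset (Finset (Fin n)) := (suppW f).filter (fun S => i ∈ S) with hF
  have hW : ∀ S, bFourier h S = if i ∈ S then 2 * bFourier g S else 0 := by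
    intro S
    rw [hh, bFourier_sub g (fun x => g (flipBit x i)) S, bFourier_comp_flip]
    by_cases hS : i ∈ S <;> simp [hS] <;> ring
  have hpm : ∀ y, g y = 1 ∨ g y = -1 := by
    intro y
    rw [hg, toPM_eq]
    by_cases hf : f y <;> simp [hf]
  have habs : ∀ x, |h x| ≤ h x ^ 2 / 2 := by
    intro x
    have hhx : h x = g x - g (flipBit x i) := rfl
    rcases hpm x with h1 | h1 <;> rcases hpm (flipBit x i) with h2 | h2 <;>
      rw [hhx, h1, h2] <;> norm_num
  obtain ⟨x₀, hx₀⟩ := hdepi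
  have h2 : |h x₀| = 2 := by
    have hhx : h x₀ = g x₀ - g (flipBit x₀ i) := rfl
    have e1 : g x₀ = if f x₀ then (-1 : ℝ) else 1 := toPM_eq f x₀
    have e2 : g (flipBit x₀ i) = if f (flipBit x₀ i) then (-1 : ℝ) else 1 :=
      toPM_eq f (flipBit x₀ i)
    cases hfx : f x₀ <;> cases hfy : f (flipBit x₀ i) <;>
      rw [hfx] at e1 <;> rw [hfy] at e2 <;>
      first
        | (exact absurd (hfy.trans hfx.symm) hx₀)
        | (rw [hhx, e1, e2]; norm_num)
  have hb1 : (2 : ℝ) ≤ ∑ S ∈ F, |bFourier h S| := by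
    calc (2 : ℝ) = |h x₀| := h2.symm
      _ = |∑ S : Finset (Fin n), bFourier h S * chi S x₀| := by rw [inversion h x₀]
      _ ≤ ∑ S : Finset (Fin n), |bFourier h S * chi S x₀| :=
          Finset.abs_sum_le_sum_abs _ _
      _ = ∑ S : Finset (Fin n), |bFourier h S| := by
          apply Finset.sum_congr rfl
          intro S _
          rw [abs_mul, abs_chi, mul_one]
      _ = ∑ S ∈ F, |bFourier h S| := by
          apply (Finset.sum_subset (Finset.subset_univ F) _).symm
          intro S _ hSF
          rw [hF, Finset.mem_filter, mem_suppW] at hSF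
          push_neg at hSF
          rw [hW]
          by_cases hiS : i ∈ S
          · by_cases hz : bFourier (toPM f) S = 0
            · rw [if_pos hiS]
              rw [hg]
              rw [hz]
              simp
            · exact absurd hiS (hSF hz)
          · simp [hiS]
  have hcoef : ∀ S, |bFourier h S| ≤ (∑ x : Fin n → Bool, |h x|) / 2 ^ n := by
    intro S
    rw [bFourier_eq, abs_div, abs_pow, abs_two]
    gcongr
    calc |∑ x : Fin n → Bool, h x * chi S x| ≤ ∑ x : Fin n → Bool, |h x * chi S x| :=
        Finset.abs_sum_le_sum_abs _ _
      _ = ∑ x : Fin n → Bool, |h x| := by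
          apply Finset.sum_congr rfl
          intro x _
          rw [abs_mul, abs_chi, mul_one]
  have hPar : ∑ x : Fin n → Bool, h x ^ 2 = 2 ^ n * ∑ S : Finset (Fin n), bFourier h S ^ 2 := by
    have hp := parseval h h
    simp_rw [← sq] at hp
    exact hp
  have hQ4 : ∑ S : Finset (Fin n), bFourier h S ^ 2 = 4 * Q := by
    have e : ∀ S : Finset (Fin n), bFourier h S ^ 2
        = if i ∈ S then 4 * bFourier (toPM f) S ^ 2 else 0 := by
      intro S
      rw [hW]
      by_cases hS : i ∈ S
      · rw [if_pos hS, if_pos hS, hg]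
        ring
      · rw [if_neg hS, if_neg hS]
        norm_num
    simp_rw [e]
    rw [← Finset.sum_filter, hQdef, Finset.mul_sum]
  have hsum_abs : ∑ x : Fin n → Bool, |h x| ≤ 2 ^ n * (2 * Q) := by
    calc ∑ x : Fin n → Bool, |h x| ≤ ∑ x : Fin n → Bool, h x ^ 2 / 2 :=
        Finset.sum_le_sum fun x _ => habs x
      _ = (∑ x : Fin n → Bool, h x ^ 2) / 2 := by rw [Finset.sum_div]
      _ = (2 ^ n * (4 * Q)) / 2 := by rw [hPar, hQ4]
      _ = 2 ^ n * (2 * Q) := by ring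
  have hQ0 : (0 : ℝ) ≤ Q := by
    rw [hQdef]
    exact Finset.sum_nonneg fun S _ => sq_nonneg _
  have hFcard : (2 : ℝ) ≤ (F.card : ℝ) * (2 * Q) := by
    calc (2 : ℝ) ≤ ∑ S ∈ F, |bFourier h S| := hb1
      _ ≤ ∑ _S ∈ F, (∑ x : Fin n → Bool, |h x|) / 2 ^ n :=
          Finset.sum_le_sum fun S _ => hcoef S
      _ = (F.card : ℝ) * ((∑ x : Fin n → Bool, |h x|) / 2 ^ n) := by
          rw [Finset.sum_const, nsmul_eq_mul]
      _ ≤ (F.card : ℝ) * (2 * Q) := by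
          apply mul_le_mul_of_nonneg_left _ (Nat.cast_nonneg _)
          rw [div_le_iff₀ (by positivity : (0 : ℝ) < 2 ^ n)]
          calc ∑ x : Fin n → Bool, |h x| ≤ 2 ^ n * (2 * Q) := hsum_abs
            _ = 2 * Q * 2 ^ n := by ring
  nlinarith [hFcard]

/-- Explicit Möbius interpolation coefficients. -/
def interp (f : (Fin n → Bool) → Bool) (S : Finset (Fin n)) : ℝ :=
  ∑ T ∈ S.powerset, (-1 : ℝ) ^ (S.card - T.card) * (if f (fun i => decide (i ∈ T)) then 1 else 0)

lemma monomial_eq (x : Fin n → Bool) (S : Finset (Fin n)) :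
    (∏ i ∈ S, (if x i then (1 : ℝ) else 0)) =
      if S ⊆ Finset.univ.filter (fun i => x i = true) then 1 else 0 := by
  by_cases h : S ⊆ Finset.univ.filter (fun i => x i = true)
  · rw [if_pos h]
    apply Finset.prod_eq_one
    intro i hi
    have hmem := h hi
    rw [Finset.mem_filter] at hmem
    simp [hmem.2]
  · rw [if_neg h]
    obtain ⟨i, hiS, hiX⟩ := Finset.not_subset.mp h
    apply Finset.prod_eq_zero hiS
    rw [Finset.mem_filter] at hiX
    push_neg at hiX
    have hxi : ¬ x i = true := hiX (Finset.mem_univ i)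
    simp [hxi]

lemma sum_neg_one_pow_powerset (X : Finset (Fin n)) :
    ∑ U ∈ X.powerset, (-1 : ℝ) ^ U.card = if X = ∅ then 1 else 0 := by
  have h1 := Finset.sum_powerset_neg_one_pow_card (x := X)
  have h2 : ((∑ m ∈ X.powerset, (-1 : ℤ) ^ m.card : ℤ) : ℝ)
      = ∑ U ∈ X.powerset, (-1 : ℝ) ^ U.card := by push_cast; rfl
  rw [← h2, h1]
  by_cases h : X = ∅ <;> simp [h]

lemma interp_represents (f : (Fin n → Bool) → Bool) : Represents (interp f) f := by
  classical
  intro x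
  set X : Finset (Fin n) := Finset.univ.filter (fun i => x i = true) with hX
  have hxX : (fun i => decide (i ∈ X)) = x := by
    funext i
    cases hx : x i
    · simp [hX, hx]
    · simp [hX, hx]
  have step2 : mlEval (interp f) x = ∑ S ∈ X.powerset, interp f S := by
    unfold mlEval
    have e : ∀ S : Finset (Fin n), interp f S * ∏ i ∈ S, (if x i then (1 : ℝ) else 0)
        = if S ∈ X.powerset then interp f S else 0 := by
      intro S
      rw [monomial_eq, ← hX]
      by_cases h : S ⊆ X
      · rw [if_pos h, if_pos (Finset.mem_powerset.mpr h), mul_one]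
      · rw [if_neg h, if_neg (fun hc => h (Finset.mem_powerset.mp hc)), mul_zero]
    simp_rw [e]
    rw [Finset.sum_ite_mem, Finset.univ_inter]
  rw [step2]
  unfold interp
  have swap : ∑ S ∈ X.powerset, ∑ T ∈ S.powerset,
      (-1 : ℝ) ^ (S.card - T.card) * (if f (fun i => decide (i ∈ T)) then 1 else 0)
      = ∑ T ∈ X.powerset, ∑ S ∈ Finset.univ.filter (fun S => T ⊆ S ∧ S ⊆ X),
          (-1 : ℝ) ^ (S.card - T.card) * (if f (fun i => decide (i ∈ T)) then 1 else 0) := by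
    apply Finset.sum_comm'
    intro S T
    simp only [Finset.mem_powerset, Finset.mem_filter, Finset.mem_univ, true_and]
    constructor
    · rintro ⟨h1, h2⟩
      exact ⟨⟨h2, h1⟩, h2.trans h1⟩
    · rintro ⟨⟨h1, h2⟩, _⟩
      exact ⟨h2, h1⟩
  rw [swap]
  have inner : ∀ T ∈ X.powerset,
      ∑ S ∈ Finset.univ.filter (fun S => T ⊆ S ∧ S ⊆ X), (-1 : ℝ) ^ (S.card - T.card)
        = if T = X then 1 else 0 := by
    intro T hT
    rw [Finset.mem_powerset] at hT
    have hbij : ∑ S ∈ Finset.univ.filter (fun S => T ⊆ S ∧ S ⊆ X),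
        (-1 : ℝ) ^ (S.card - T.card)
        = ∑ U ∈ (X \ T).powerset, (-1 : ℝ) ^ U.card := by
      apply Finset.sum_nbij' (i := fun S => S \ T) (j := fun U => T ∪ U)
      · intro S hS
        rw [Finset.mem_filter] at hS
        rw [Finset.mem_powerset]
        exact Finset.sdiff_subset_sdiff hS.2.2 (Finset.Subset.refl T)
      · intro U hU
        rw [Finset.mem_powerset] at hU
        rw [Finset.mem_filter]
        refine ⟨Finset.mem_univ _, Finset.subset_union_left, ?_⟩
        exact Finset.union_subset hT (hU.trans (Finset.sdiff_subset))
      · intro S hS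
        rw [Finset.mem_filter] at hS
        exact Finset.union_sdiff_of_subset hS.2.1
      · intro U hU
        rw [Finset.mem_powerset] at hU
        apply Finset.union_sdiff_cancel_left
        exact Finset.disjoint_of_subset_right hU Finset.sdiff_disjoint.symm
      · intro S hS
        rw [Finset.mem_filter] at hS
        rw [Finset.card_sdiff_of_subset hS.2.1]
    rw [hbij, sum_neg_one_pow_powerset]
    by_cases h : T = X
    · have : X \ T = ∅ := by
        rw [h]
        exact Finset.sdiff_self X
      rw [if_pos this, if_pos h]
    · have hne : X \ T ≠ ∅ := by
        intro he
        exact h (Finset.Subset.antisymm hT (Finset.sdiff_eq_empty_iff_subset.mp he))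
      rw [if_neg hne, if_neg h]
  calc ∑ T ∈ X.powerset, ∑ S ∈ Finset.univ.filter (fun S => T ⊆ S ∧ S ⊆ X),
        (-1 : ℝ) ^ (S.card - T.card) * (if f (fun i => decide (i ∈ T)) then 1 else 0)
      = ∑ T ∈ X.powerset,
          (if T = X then (if f (fun i => decide (i ∈ T)) then (1 : ℝ) else 0) else 0) := by
        apply Finset.sum_congr rfl
        intro T hT
        rw [← Finset.sum_mul, inner T hT]
        by_cases h : T = X <;> simp [h]
    _ = (if f (fun i => decide (i ∈ X)) then (1 : ℝ) else 0) := by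
        rw [Finset.sum_ite_eq' X.powerset X
          (fun T => if f (fun i => decide (i ∈ T)) then (1 : ℝ) else 0)]
        rw [if_pos (Finset.mem_powerset_self X)]
    _ = if f x then 1 else 0 := by rw [hxX]

lemma exists_repr (f : (Fin n → Bool) → Bool) :
    ∃ c : Finset (Fin n) → ℝ, Represents c f ∧ ∀ S, c S ≠ 0 → S.card ≤ degR f := by
  have hne : {d : ℕ | ∃ c : Finset (Fin n) → ℝ,
      Represents c f ∧ ∀ S, c S ≠ 0 → S.card ≤ d}.Nonempty :=
    ⟨n, interp f, interp_represents f, fun S _ => by simpa using Finset.card_le_univ S⟩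
  unfold degR degRing
  exact Nat.sInf_mem hne

end

end BF

/-- Let `f : {0,1}ⁿ → {0,1}` depend on all its inputs. Then
`deg f * √(sparsity f) ≥ n`. -/
theorem degR_mul_sqrt_sparsity_ge {n : ℕ} (f : (Fin n → Bool) → Bool)
    (hdep : ∀ i : Fin n, ∃ x, f (flipBit x i) ≠ f x) :
    (n : ℝ) ≤ (degR f : ℝ) * Real.sqrt (sparsity f) := by
  classical
  obtain ⟨c, hc, hdc⟩ := BF.exists_repr f
  set d : ℕ := degR f with hd
  have hsupp : ∀ S ∈ BF.suppW f, S.card ≤ d := by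
    intro S hS
    rw [BF.mem_suppW] at hS
    by_contra hlt
    push_neg at hlt
    exact hS (BF.degree_support f c hc d hdc S hlt)
  set Q : Fin n → ℝ := fun i => ∑ S ∈ Finset.univ.filter (fun S : Finset (Fin n) => i ∈ S),
    bFourier (toPM f) S ^ 2 with hQ
  set r : Fin n → ℕ := fun i => ((BF.suppW f).filter fun S => i ∈ S).card with hr
  have hkey : ∀ i, 1 ≤ (r i : ℝ) * Q i := fun i => BF.coord_ineq f i (hdep i)
  have hQ0 : ∀ i, 0 ≤ Q i := fun i => Finset.sum_nonneg fun S _ => sq_nonneg _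
  have hr0 : ∀ i, 0 < (r i : ℝ) := by
    intro i
    rcases Nat.eq_zero_or_pos (r i) with h | h
    · exfalso
      have h1 := hkey i
      rw [h] at h1
      norm_num at h1
    · exact_mod_cast h
  have hinvr : ∀ i, (r i : ℝ)⁻¹ ≤ Q i := by
    intro i
    have h2 := hr0 i
    calc (r i : ℝ)⁻¹ = (r i : ℝ)⁻¹ * 1 := (mul_one _).symm
      _ ≤ (r i : ℝ)⁻¹ * ((r i : ℝ) * Q i) :=
          mul_le_mul_of_nonneg_left (hkey i) (by positivity)
      _ = Q i := by field_simp
  have hfiltmem : ∀ S : Finset (Fin n), Finset.univ.filter (fun i : Fin n => i ∈ S) = S := by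
    intro S
    ext i
    simp
  have hsumQ : ∑ i : Fin n, Q i ≤ (d : ℝ) := by
    have swap : ∑ i : Fin n, Q i
        = ∑ S : Finset (Fin n), (S.card : ℝ) * bFourier (toPM f) S ^ 2 := by
      simp_rw [hQ, Finset.sum_filter]
      rw [Finset.sum_comm]
      apply Finset.sum_congr rfl
      intro S _
      rw [← Finset.sum_filter, hfiltmem S, Finset.sum_const, nsmul_eq_mul]
    rw [swap]
    calc ∑ S : Finset (Fin n), (S.card : ℝ) * bFourier (toPM f) S ^ 2
        ≤ ∑ S : Finset (Fin n), (d : ℝ) * bFourier (toPM f) S ^ 2 := by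
          apply Finset.sum_le_sum
          intro S _
          by_cases hz : bFourier (toPM f) S = 0
          · simp [hz]
          · have hmem : S ∈ BF.suppW f := (BF.mem_suppW f S).mpr hz
            have hcard : (S.card : ℝ) ≤ (d : ℝ) := by exact_mod_cast hsupp S hmem
            exact mul_le_mul_of_nonneg_right hcard (sq_nonneg _)
      _ = (d : ℝ) * ∑ S : Finset (Fin n), bFourier (toPM f) S ^ 2 := by
          rw [Finset.mul_sum]
      _ = (d : ℝ) := by rw [BF.parseval_toPM f, mul_one]
  have hsumr : ∑ i : Fin n, (r i : ℝ) ≤ (d : ℝ) * (sparsity f : ℝ) := by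
    have e1 : ∀ i : Fin n, (r i : ℝ) = ∑ S ∈ BF.suppW f, (if i ∈ S then (1 : ℝ) else 0) := by
      intro i
      simp only [hr]
      rw [Finset.card_filter]
      push_cast
      apply Finset.sum_congr rfl
      intro S _
      by_cases h : i ∈ S <;> simp [h]
    simp_rw [e1]
    rw [Finset.sum_comm]
    calc ∑ S ∈ BF.suppW f, ∑ i : Fin n, (if i ∈ S then (1 : ℝ) else 0)
        = ∑ S ∈ BF.suppW f, (S.card : ℝ) := by
          apply Finset.sum_congr rfl
          intro S _
          rw [← Finset.sum_filter, hfiltmem S, Finset.sum_const, nsmul_eq_mul, mul_one]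
      _ ≤ ∑ S ∈ BF.suppW f, (d : ℝ) := by
          apply Finset.sum_le_sum
          intro S hS
          exact_mod_cast hsupp S hS
      _ = ((BF.suppW f).card : ℝ) * d := by rw [Finset.sum_const, nsmul_eq_mul]
      _ = (d : ℝ) * (sparsity f : ℝ) := by rw [BF.sparsity_eq f]; ring
  have hCS := Finset.sum_mul_sq_le_sq_mul_sq Finset.univ
    (fun i : Fin n => Real.sqrt ((r i : ℝ)⁻¹)) (fun i : Fin n => Real.sqrt (r i))
  have hfg : ∀ i : Fin n, Real.sqrt ((r i : ℝ)⁻¹) * Real.sqrt (r i) = 1 := by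
    intro i
    rw [← Real.sqrt_mul (by positivity), inv_mul_cancel₀ (ne_of_gt (hr0 i)), Real.sqrt_one]
  have hs1 : ∀ i : Fin n, Real.sqrt ((r i : ℝ)⁻¹) ^ 2 = (r i : ℝ)⁻¹ := fun i =>
    Real.sq_sqrt (by positivity)
  have hs2 : ∀ i : Fin n, Real.sqrt ((r i : ℝ)) ^ 2 = (r i : ℝ) := fun i =>
    Real.sq_sqrt (Nat.cast_nonneg _)
  simp_rw [hfg, hs1, hs2, Finset.sum_const, Finset.card_univ, Fintype.card_fin,
    nsmul_eq_mul, mul_one] at hCS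
  -- hCS : (n : ℝ) ^ 2 ≤ (∑ i, (r i)⁻¹) * ∑ i, (r i)
  have hA : ∑ i : Fin n, (r i : ℝ)⁻¹ ≤ (d : ℝ) :=
    le_trans (Finset.sum_le_sum fun i _ => hinvr i) hsumQ
  have hApos : 0 ≤ ∑ i : Fin n, (r i : ℝ)⁻¹ :=
    Finset.sum_nonneg fun i _ => by positivity
  have hBpos : 0 ≤ ∑ i : Fin n, (r i : ℝ) :=
    Finset.sum_nonneg fun i _ => Nat.cast_nonneg _
  have hn2 : (n : ℝ) ^ 2 ≤ (d : ℝ) ^ 2 * (sparsity f : ℝ) := by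
    calc (n : ℝ) ^ 2 ≤ (∑ i : Fin n, (r i : ℝ)⁻¹) * ∑ i : Fin n, (r i : ℝ) := hCS
      _ ≤ (d : ℝ) * ((d : ℝ) * (sparsity f : ℝ)) := by
          apply mul_le_mul hA hsumr hBpos (by positivity)
      _ = (d : ℝ) ^ 2 * (sparsity f : ℝ) := by ring
  calc (n : ℝ) = Real.sqrt ((n : ℝ) ^ 2) := (Real.sqrt_sq (Nat.cast_nonneg n)).symm
    _ ≤ Real.sqrt ((d : ℝ) ^ 2 * (sparsity f : ℝ)) := Real.sqrt_le_sqrt hn2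
    _ = Real.sqrt ((d : ℝ) ^ 2) * Real.sqrt (sparsity f : ℝ) := Real.sqrt_mul (sq_nonneg _) _
    _ = (d : ℝ) * Real.sqrt (sparsity f : ℝ) := by rw [Real.sqrt_sq (Nat.cast_nonneg d)]
end

section
/- Let f:{0,1}^n→{0,1} depend on all its inputs. Then s(f) · √(sparsity(f)) ≥ n. -/
open Finset

namespace SensSparse
variable {n : ℕ}

def chi (S : Finset (Fin n)) (x : Fin n → Bool) : ℝ :=
  (-1 : ℝ) ^ (S.filter fun i => x i = true).card

lemma chi_eq_prod (S : Finset (Fin n)) (x : Fin n → Bool) :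
    chi S x = ∏ i ∈ S, (if x i = true then (-1:ℝ) else 1) := by
  rw [Finset.prod_ite, prod_const, prod_const, one_pow, mul_one, chi]

lemma abs_chi (S : Finset (Fin n)) (x : Fin n → Bool) : |chi S x| = 1 := by
  rw [chi, abs_pow, abs_neg, abs_one, one_pow]

lemma sum_chi_mul (x y : Fin n → Bool) :
    ∑ S : Finset (Fin n), chi S x * chi S y = if x = y then (2:ℝ)^n else 0 := by
  have key : ∀ S : Finset (Fin n), chi S x * chi S y =
      ∏ i ∈ S, ((if x i = true then (-1:ℝ) else 1) * (if y i = true then (-1:ℝ) else 1)) := by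
    intro S
    rw [chi_eq_prod, chi_eq_prod, Finset.prod_mul_distrib]
  by_cases hxy : x = y
  · subst hxy
    rw [if_pos rfl]
    have : ∀ S : Finset (Fin n), chi S x * chi S x = 1 := by
      intro S; rw [key]
      apply Finset.prod_eq_one
      intro i _
      by_cases h : x i = true <;> simp [h]
    rw [Finset.sum_congr rfl (fun S _ => this S), Finset.sum_const, Finset.card_univ,
      Fintype.card_finset, nsmul_eq_mul, mul_one, Fintype.card_fin]
    push_cast; ring
  · rw [if_neg hxy]
    have hprod : ∑ S : Finset (Fin n),
        ∏ i ∈ S, ((if x i = true then (-1:ℝ) else 1) * (if y i = true then (-1:ℝ) else 1)) = ∏ i : Fin n,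
        (((if x i = true then (-1:ℝ) else 1) * (if y i = true then (-1:ℝ) else 1)) + 1) := by
      rw [Finset.prod_add]
      rw [← Finset.powerset_univ]
      apply Finset.sum_congr rfl
      intro t _
      simp
    rw [Finset.sum_congr rfl (fun S _ => key S), hprod]
    obtain ⟨i, hi⟩ : ∃ i, x i ≠ y i := by
      by_contra h; push_neg at h; exact hxy (funext h)
    apply Finset.prod_eq_zero (Finset.mem_univ i)
    cases hxi : x i <;> cases hyi : y i <;> simp [hxi, hyi] at hi ⊢

lemma sum_x_chi_mul (S T : Finset (Fin n)) :
    ∑ x : Fin n → Bool, chi S x * chi T x = if S = T then (2:ℝ)^n else 0 := by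
  have hrep : ∀ (U : Finset (Fin n)) (x : Fin n → Bool),
      chi U x = ∏ i : Fin n, (if i ∈ U then (if x i = true then (-1:ℝ) else 1) else 1) := by
    intro U x
    rw [chi_eq_prod, Finset.prod_ite_mem, Finset.univ_inter]
  have key : ∀ x : Fin n → Bool, chi S x * chi T x = ∏ i : Fin n,
      ((if i ∈ S then (if x i = true then (-1:ℝ) else 1) else 1) *
       (if i ∈ T then (if x i = true then (-1:ℝ) else 1) else 1)) := by
    intro x; rw [hrep S, hrep T, Finset.prod_mul_distrib]
  rw [Finset.sum_congr rfl (fun x _ => key x)]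
  rw [show (Finset.univ : Finset (Fin n → Bool)) = Fintype.piFinset (fun _ => (Finset.univ : Finset Bool)) from (Fintype.piFinset_univ).symm]
  rw [← Finset.prod_univ_sum (fun _ : Fin n => (Finset.univ : Finset Bool))
    (fun i b => (if i ∈ S then (if b = true then (-1:ℝ) else 1) else 1) *
      (if i ∈ T then (if b = true then (-1:ℝ) else 1) else 1))]
  by_cases hST : S = T
  · subst hST
    rw [if_pos rfl]
    have : ∀ i : Fin n, ∑ b : Bool, ((if i ∈ S then (if b = true then (-1:ℝ) else 1) else 1) *
       (if i ∈ S then (if b = true then (-1:ℝ) else 1) else 1)) = 2 := by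
      intro i
      by_cases h : i ∈ S <;> simp [h, Fintype.sum_bool]; norm_num
    rw [Finset.prod_congr rfl (fun i _ => this i), Finset.prod_const, Finset.card_univ, Fintype.card_fin]
  · rw [if_neg hST]
    obtain ⟨i, hi⟩ : ∃ i, (i ∈ S ↔ i ∈ T) → False := by
      by_contra h; push_neg at h
      exact hST (Finset.ext fun i => (h i).1)
    apply Finset.prod_eq_zero (Finset.mem_univ i)
    by_cases h1 : i ∈ S <;> by_cases h2 : i ∈ T <;>
      simp [h1, h2, Fintype.sum_bool] at hi ⊢


lemma bFourier_eq (g : (Fin n → Bool) → ℝ) (S : Finset (Fin n)) :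
    bFourier g S = (∑ x : Fin n → Bool, g x * chi S x) / 2 ^ n := rfl

lemma two_pow_ne (n : ℕ) : ((2:ℝ) ^ n) ≠ 0 := by positivity

lemma inversion (g : (Fin n → Bool) → ℝ) (x : Fin n → Bool) :
    g x = ∑ S : Finset (Fin n), bFourier g S * chi S x := by
  have h1 : ∀ S : Finset (Fin n), bFourier g S * chi S x
      = ∑ y : Fin n → Bool, g y * (chi S y * chi S x) / 2 ^ n := by
    intro S
    rw [bFourier_eq, div_mul_eq_mul_div, Finset.sum_mul, Finset.sum_div]
    congr 1; ext y; ring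
  rw [Finset.sum_congr rfl (fun S _ => h1 S), Finset.sum_comm]
  have h2 : ∀ y : Fin n → Bool, ∑ S : Finset (Fin n), g y * (chi S y * chi S x) / 2 ^ n
      = g y * (if y = x then (2:ℝ)^n else 0) / 2 ^ n := by
    intro y
    rw [← Finset.sum_div, ← Finset.mul_sum, sum_chi_mul]
  rw [Finset.sum_congr rfl (fun y _ => h2 y), Finset.sum_eq_single x]
  · rw [if_pos rfl]; field_simp
  · intro y _ hy; rw [if_neg hy, mul_zero, zero_div]
  · intro h; exact absurd (Finset.mem_univ x) h

lemma chi_flip (S : Finset (Fin n)) (x : Fin n → Bool) (i : Fin n) :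
    chi S (flipBit x i) = (if i ∈ S then (-1:ℝ) else 1) * chi S x := by
  have hne : ∀ j, j ≠ i → flipBit x i j = x j := by
    intro j hj; simp [flipBit, Function.update_of_ne hj]
  have heq : flipBit x i i = !x i := by simp [flipBit]
  by_cases h : i ∈ S
  · rw [if_pos h, chi_eq_prod, chi_eq_prod,
      ← Finset.mul_prod_erase S _ h, ← Finset.mul_prod_erase S _ h]
    have h2 : ∏ j ∈ S.erase i, (if flipBit x i j = true then (-1:ℝ) else 1)
        = ∏ j ∈ S.erase i, (if x j = true then (-1:ℝ) else 1) := by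
      apply Finset.prod_congr rfl
      intro j hj
      rw [hne j (Finset.ne_of_mem_erase hj)]
    rw [h2, heq]
    cases hxi : x i <;> simp
  · rw [if_neg h, one_mul, chi_eq_prod, chi_eq_prod]
    apply Finset.prod_congr rfl
    intro j hj
    rw [hne j (fun hji => h (hji ▸ hj))]

lemma derivative (g : (Fin n → Bool) → ℝ) (x : Fin n → Bool) (i : Fin n) :
    ∑ S ∈ Finset.univ.filter (fun S : Finset (Fin n) => i ∈ S), bFourier g S * chi S x
      = (g x - g (flipBit x i)) / 2 := by
  rw [inversion g x, inversion g (flipBit x i)]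
  rw [← Finset.sum_sub_distrib]
  have : ∀ S : Finset (Fin n), bFourier g S * chi S x - bFourier g S * chi S (flipBit x i)
      = if i ∈ S then 2 * (bFourier g S * chi S x) else 0 := by
    intro S
    rw [chi_flip]
    by_cases h : i ∈ S <;> simp [h] <;> ring
  rw [Finset.sum_congr rfl (fun S _ => this S), Finset.sum_ite, Finset.sum_const_zero, add_zero,
    ← Finset.mul_sum]
  ring


lemma toPM_sq (f : (Fin n → Bool) → Bool) (x : Fin n → Bool) : toPM f x ^ 2 = 1 := by
  unfold toPM; cases h : f x <;> simp [h] <;> norm_num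

lemma pointwise_diff (f : (Fin n → Bool) → Bool) (x : Fin n → Bool) (i : Fin n) :
    (toPM f x - toPM f (flipBit x i)) / 2
      = if f (flipBit x i) ≠ f x then toPM f x else 0 := by
  unfold toPM
  cases h1 : f x <;> cases h2 : f (flipBit x i) <;> simp [h1, h2] <;> norm_num

lemma sens_identity (f : (Fin n → Bool) → Bool) (x : Fin n → Bool) :
    ∑ S : Finset (Fin n), ((S.card : ℝ) * bFourier (toPM f) S) * chi S x
      = (sensAt f x : ℝ) * toPM f x := by
  have h1 : ∀ S : Finset (Fin n), ((S.card : ℝ) * bFourier (toPM f) S) * chi S x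
      = ∑ i : Fin n, (if i ∈ S then bFourier (toPM f) S * chi S x else 0) := by
    intro S
    rw [Finset.sum_ite, Finset.sum_const_zero, add_zero, Finset.sum_const,
      Finset.filter_mem_eq_inter, Finset.univ_inter, nsmul_eq_mul]
    ring
  rw [Finset.sum_congr rfl (fun S _ => h1 S), Finset.sum_comm]
  have h2 : ∀ i : Fin n, ∑ S : Finset (Fin n),
      (if i ∈ S then bFourier (toPM f) S * chi S x else 0)
      = if f (flipBit x i) ≠ f x then toPM f x else 0 := by
    intro i
    rw [← Finset.sum_filter, derivative, pointwise_diff]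
  rw [Finset.sum_congr rfl (fun i _ => h2 i), Finset.sum_ite, Finset.sum_const_zero, add_zero,
    Finset.sum_const, nsmul_eq_mul, sensAt]

lemma parseval (c : Finset (Fin n) → ℝ) :
    ∑ x : Fin n → Bool, (∑ S : Finset (Fin n), c S * chi S x) ^ 2
      = 2 ^ n * ∑ S : Finset (Fin n), c S ^ 2 := by
  have h1 : ∀ x : Fin n → Bool, (∑ S : Finset (Fin n), c S * chi S x) ^ 2
      = ∑ S : Finset (Fin n), ∑ T : Finset (Fin n), c S * c T * (chi S x * chi T x) := by
    intro x
    rw [sq, Finset.sum_mul_sum]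
    apply Finset.sum_congr rfl; intro S _
    apply Finset.sum_congr rfl; intro T _
    ring
  rw [Finset.sum_congr rfl (fun x _ => h1 x), Finset.sum_comm]
  have h2 : ∀ S : Finset (Fin n),
      ∑ x : Fin n → Bool, ∑ T : Finset (Fin n), c S * c T * (chi S x * chi T x)
      = 2 ^ n * c S ^ 2 := by
    intro S
    rw [Finset.sum_comm]
    have h3 : ∀ T : Finset (Fin n), ∑ x : Fin n → Bool, c S * c T * (chi S x * chi T x)
        = c S * c T * (if S = T then (2:ℝ)^n else 0) := by
      intro T; rw [← Finset.mul_sum, sum_x_chi_mul]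
    rw [Finset.sum_congr rfl (fun T _ => h3 T), Finset.sum_eq_single S]
    · rw [if_pos rfl]; ring
    · intro T _ hT; rw [if_neg fun h => hT h.symm, mul_zero]
    · intro h; exact absurd (Finset.mem_univ S) h
  rw [Finset.sum_congr rfl (fun S _ => h2 S), ← Finset.mul_sum]


lemma abs_toPM (f : (Fin n → Bool) → Bool) (x : Fin n → Bool) : |toPM f x| = 1 := by
  unfold toPM; cases h : f x <;> simp [h] <;> norm_num

lemma sensAt_le_sens (f : (Fin n → Bool) → Bool) (x : Fin n → Bool) :
    sensAt f x ≤ sens f := Finset.le_sup (Finset.mem_univ x)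

end SensSparse

open SensSparse in

/-- Let `f : {0,1}ⁿ → {0,1}` depend on all its inputs. Then
`s f * √(sparsity f) ≥ n`. -/
theorem sens_mul_sqrt_sparsity_ge {n : ℕ} (f : (Fin n → Bool) → Bool)
    (hdep : ∀ i : Fin n, ∃ x, f (flipBit x i) ≠ f x) :
    (n : ℝ) ≤ (sens f : ℝ) * Real.sqrt (sparsity f) := by

  classical
  set g := toPM f with hg
  set c : Finset (Fin n) → ℝ := fun S => (S.card : ℝ) * bFourier g S with hc
  -- Step 1: each relevant variable has ℓ¹ Fourier weight at least 1
  have step1 : ∀ i : Fin n,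
      (1:ℝ) ≤ ∑ S ∈ Finset.univ.filter (fun S : Finset (Fin n) => i ∈ S), |bFourier g S| := by
    intro i
    obtain ⟨x, hx⟩ := hdep i
    have hd := derivative g x i
    have habs : |(g x - g (flipBit x i)) / 2| = 1 := by
      rw [hg, pointwise_diff f x i, if_pos hx, abs_toPM]
    calc (1:ℝ) = |∑ S ∈ Finset.univ.filter (fun S : Finset (Fin n) => i ∈ S),
          bFourier g S * chi S x| := by rw [hd, habs]
      _ ≤ ∑ S ∈ Finset.univ.filter (fun S : Finset (Fin n) => i ∈ S),
          |bFourier g S * chi S x| := Finset.abs_sum_le_sum_abs _ _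
      _ = ∑ S ∈ Finset.univ.filter (fun S : Finset (Fin n) => i ∈ S), |bFourier g S| := by
          apply Finset.sum_congr rfl; intro S _; rw [abs_mul, abs_chi, mul_one]
  -- Step 2
  have step2 : (n:ℝ) ≤ ∑ S : Finset (Fin n), (S.card : ℝ) * |bFourier g S| := by
    have hswap : ∑ S : Finset (Fin n), (S.card : ℝ) * |bFourier g S|
        = ∑ i : Fin n, ∑ S ∈ Finset.univ.filter (fun S : Finset (Fin n) => i ∈ S),
            |bFourier g S| := by
      have h1 : ∀ S : Finset (Fin n), (S.card : ℝ) * |bFourier g S|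
          = ∑ i : Fin n, (if i ∈ S then |bFourier g S| else 0) := by
        intro S
        rw [Finset.sum_ite, Finset.sum_const_zero, add_zero, Finset.sum_const,
          Finset.filter_mem_eq_inter, Finset.univ_inter, nsmul_eq_mul]
      rw [Finset.sum_congr rfl (fun S _ => h1 S), Finset.sum_comm]
      apply Finset.sum_congr rfl
      intro i _
      rw [← Finset.sum_filter]
    rw [hswap]
    calc (n:ℝ) = ∑ _i : Fin n, (1:ℝ) := by simp
      _ ≤ _ := Finset.sum_le_sum (fun i _ => step1 i)
  -- Step 4: Parseval bound
  have step4 : ∑ S : Finset (Fin n), c S ^ 2 ≤ ((sens f : ℝ)) ^ 2 := by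
    have hpar := parseval c
    have hpt : ∀ x : Fin n → Bool, (∑ S : Finset (Fin n), c S * chi S x) ^ 2
        = ((sensAt f x : ℝ)) ^ 2 := by
      intro x
      have := sens_identity f x
      rw [hc]
      simp only at this ⊢
      rw [this, mul_pow, ← hg, toPM_sq, mul_one]
    have hb : ∑ x : Fin n → Bool, (∑ S : Finset (Fin n), c S * chi S x) ^ 2
        ≤ 2 ^ n * ((sens f : ℝ)) ^ 2 := by
      rw [Finset.sum_congr rfl (fun x _ => hpt x)]
      calc ∑ x : Fin n → Bool, ((sensAt f x : ℝ)) ^ 2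
          ≤ ∑ _x : Fin n → Bool, ((sens f : ℝ)) ^ 2 := by
            apply Finset.sum_le_sum
            intro x _
            have hle : (sensAt f x : ℝ) ≤ (sens f : ℝ) := by
              exact_mod_cast sensAt_le_sens f x
            exact pow_le_pow_left₀ (by positivity) hle 2
        _ = 2 ^ n * ((sens f : ℝ)) ^ 2 := by
            rw [Finset.sum_const, Finset.card_univ, nsmul_eq_mul]
            congr 1
            rw [Fintype.card_fun, Fintype.card_bool, Fintype.card_fin]
            push_cast; ring
    rw [hpar] at hb
    have h2 : (0:ℝ) < 2 ^ n := by positivity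
    exact le_of_mul_le_mul_left hb h2
  -- Step 3: Cauchy–Schwarz over the support
  set N : Finset (Finset (Fin n)) :=
    Finset.univ.filter (fun S : Finset (Fin n) => bFourier g S ≠ 0) with hN
  have hNcard : (sparsity f : ℝ) = (N.card : ℝ) := by
    unfold sparsity sparsityR
    norm_cast
  have step3 : ∑ S : Finset (Fin n), (S.card : ℝ) * |bFourier g S|
      ≤ Real.sqrt (N.card) * Real.sqrt (∑ S : Finset (Fin n), c S ^ 2) := by
    have hrestrict : ∑ S : Finset (Fin n), (S.card : ℝ) * |bFourier g S|
        = ∑ S ∈ N, (S.card : ℝ) * |bFourier g S| := by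
      rw [hN]
      symm
      apply Finset.sum_filter_of_ne
      intro S _ hS hzero
      rw [hzero, abs_zero, mul_zero] at hS
      exact hS rfl
    rw [hrestrict]
    calc ∑ S ∈ N, (S.card : ℝ) * |bFourier g S|
        = ∑ S ∈ N, (1:ℝ) * ((S.card : ℝ) * |bFourier g S|) := by simp
      _ ≤ Real.sqrt (∑ _S ∈ N, (1:ℝ) ^ 2)
          * Real.sqrt (∑ S ∈ N, ((S.card : ℝ) * |bFourier g S|) ^ 2) :=
          Real.sum_mul_le_sqrt_mul_sqrt N _ _
      _ ≤ Real.sqrt (N.card) * Real.sqrt (∑ S : Finset (Fin n), c S ^ 2) := by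
          apply mul_le_mul
          · apply Real.sqrt_le_sqrt; simp
          · apply Real.sqrt_le_sqrt
            have : ∀ S : Finset (Fin n), ((S.card : ℝ) * |bFourier g S|) ^ 2 = c S ^ 2 := by
              intro S; rw [hc]; simp only; rw [mul_pow, mul_pow, sq_abs]
            rw [Finset.sum_congr rfl (fun S _ => this S)]
            exact Finset.sum_le_sum_of_subset_of_nonneg (Finset.subset_univ N)
              (fun S _ _ => sq_nonneg _)
          · exact Real.sqrt_nonneg _
          · exact Real.sqrt_nonneg _
  have hsq : Real.sqrt (∑ S : Finset (Fin n), c S ^ 2) ≤ (sens f : ℝ) := by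
    calc Real.sqrt (∑ S : Finset (Fin n), c S ^ 2)
        ≤ Real.sqrt (((sens f : ℝ)) ^ 2) := Real.sqrt_le_sqrt step4
      _ = (sens f : ℝ) := Real.sqrt_sq (by positivity)
  calc (n:ℝ) ≤ ∑ S : Finset (Fin n), (S.card : ℝ) * |bFourier g S| := step2
    _ ≤ Real.sqrt (N.card) * Real.sqrt (∑ S : Finset (Fin n), c S ^ 2) := step3
    _ ≤ Real.sqrt (N.card) * (sens f : ℝ) := by
        apply mul_le_mul_of_nonneg_left hsq (Real.sqrt_nonneg _)
    _ = (sens f : ℝ) * Real.sqrt (sparsity f) := by rw [hNcard, mul_comm]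
end
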